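/- arXiv:2010.14146 — 7 statements merged into one kernel-verified Lean document; each statement's English description precedes it below -/
import Mathlib

section
/- Theorem 1(ii) (Z-estimation efficiency bound, finite T): If Δ_{T,A} and Λ_T are invertible, then the matrix Δ_{T,A}⁻¹ Σ_{T,A} (Δ_{T,A}⁻¹)ᵀ − Λ_T⁻¹ is positive semidefinite; equivalently, Δ_{T,A}⁻¹ Σ_{T,A} (Δ_{T,A}⁻¹)ᵀ dominates Λ_T⁻¹ in the Loewner order. -/
open MeasureTheory Matrix

/-- Entrywise expectation of a random matrix. -/
noncomputable def matExp {Ω : Type*} [MeasureSpace Ω] {m n : Type*}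
    (M : Ω → Matrix m n ℝ) : Matrix m n ℝ :=
  Matrix.of fun i j => ∫ ω, M ω i j

section aux

lemma dp_aux {m n : Type*} [Fintype m] [Fintype n] (M : Matrix m n ℝ) (u : m → ℝ) (v : n → ℝ) :
    (Mᵀ *ᵥ u) ⬝ᵥ v = u ⬝ᵥ (M *ᵥ v) := by
  rw [mulVec_transpose, ← dotProduct_mulVec]

lemma pointwise_nonneg {k q : Type*} [Fintype k] [Fintype q] [DecidableEq k]
    (S : Matrix k k ℝ) (hS : S.PosDef) (hsym : S.IsSymm)
    (Am : Matrix q k ℝ) (Dm : Matrix k q ℝ) (x y : q → ℝ) :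
    0 ≤ x ⬝ᵥ ((Am * S * Amᵀ) *ᵥ x) + 2 * (x ⬝ᵥ ((Am * Dm) *ᵥ y))
        + y ⬝ᵥ ((Dmᵀ * S⁻¹ * Dm) *ᵥ y) := by
  have hdet : IsUnit S.det := isUnit_iff_ne_zero.mpr hS.det_pos.ne'
  have hinv : S * S⁻¹ = 1 := mul_nonsing_inv S hdet
  have hinv' : S⁻¹ * S = 1 := nonsing_inv_mul S hdet
  have hsinv : (S⁻¹)ᵀ = S⁻¹ := by rw [transpose_nonsing_inv, hsym.eq]
  have htB : ((Dmᵀ * S⁻¹)ᵀ) = S⁻¹ * Dm := by rw [transpose_mul, transpose_transpose, hsinv]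
  set a := Amᵀ *ᵥ x with ha
  set b := (S⁻¹ * Dm) *ᵥ y with hbdef
  have h0 : 0 ≤ (a + b) ⬝ᵥ (S *ᵥ (a + b)) := by simpa using hS.posSemidef.dotProduct_mulVec_nonneg (a + b)
  have T1 : a ⬝ᵥ (S *ᵥ a) = x ⬝ᵥ ((Am * S * Amᵀ) *ᵥ x) := by
    rw [ha, dp_aux, mulVec_mulVec, mulVec_mulVec, Matrix.mul_assoc]
  have T3 : a ⬝ᵥ (S *ᵥ b) = x ⬝ᵥ ((Am * Dm) *ᵥ y) := by
    rw [ha, hbdef, mulVec_mulVec, dp_aux, mulVec_mulVec, ← Matrix.mul_assoc,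
      ← Matrix.mul_assoc, Matrix.mul_assoc Am S S⁻¹, hinv, Matrix.mul_one]
  have T2 : b ⬝ᵥ (S *ᵥ a) = x ⬝ᵥ ((Am * Dm) *ᵥ y) := by
    rw [hbdef, ha, ← htB, dp_aux, mulVec_mulVec, mulVec_mulVec]
    rw [show Dmᵀ * S⁻¹ * S * Amᵀ = (Am * Dm)ᵀ by
      rw [Matrix.mul_assoc Dmᵀ S⁻¹ S, hinv', Matrix.mul_one, ← transpose_mul]]
    rw [dotProduct_comm, dp_aux]
  have T4 : b ⬝ᵥ (S *ᵥ b) = y ⬝ᵥ ((Dmᵀ * S⁻¹ * Dm) *ᵥ y) := by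
    rw [hbdef, ← htB, dp_aux, mulVec_mulVec, mulVec_mulVec, htB]
    rw [show Dmᵀ * S⁻¹ * S * (S⁻¹ * Dm) = Dmᵀ * S⁻¹ * Dm by
      rw [Matrix.mul_assoc Dmᵀ S⁻¹ S, hinv', Matrix.mul_one, Matrix.mul_assoc]]
  have expand : (a + b) ⬝ᵥ (S *ᵥ (a + b))
      = a ⬝ᵥ (S *ᵥ a) + a ⬝ᵥ (S *ᵥ b) + b ⬝ᵥ (S *ᵥ a) + b ⬝ᵥ (S *ᵥ b) := by
    simp [mulVec_add, dotProduct_add, add_dotProduct]; ring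
  rw [expand, T1, T2, T3, T4] at h0
  linarith

lemma matExp_dot {Ω : Type*} [MeasureSpace Ω] {m n : Type*} [Fintype m] [Fintype n]
    (M : Ω → Matrix m n ℝ) (hint : ∀ i j, Integrable fun ω => M ω i j)
    (x : m → ℝ) (y : n → ℝ) :
    x ⬝ᵥ (matExp M *ᵥ y) = ∫ ω, x ⬝ᵥ (M ω *ᵥ y) := by
  have h1 : ∀ ω, x ⬝ᵥ (M ω *ᵥ y) = ∑ i, ∑ j, x i * (M ω i j * y j) := by
    intro ω; simp [dotProduct, mulVec, Finset.mul_sum]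
  simp only [h1]
  rw [integral_finset_sum _ (fun i _ => integrable_finset_sum _
    (fun j _ => ((hint i j).mul_const (y j)).const_mul (x i)))]
  refine Finset.sum_congr rfl fun i _ => ?_
  rw [integral_finset_sum _ (fun j _ => ((hint i j).mul_const (y j)).const_mul (x i))]
  simp only [matExp, dotProduct, mulVec, Matrix.of_apply]
  rw [Finset.mul_sum]
  refine Finset.sum_congr rfl fun j _ => ?_
  rw [MeasureTheory.integral_const_mul, MeasureTheory.integral_mul_const]

lemma dot_integrable {Ω : Type*} [MeasureSpace Ω] {m n : Type*} [Fintype m] [Fintype n]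
    (M : Ω → Matrix m n ℝ) (hint : ∀ i j, Integrable fun ω => M ω i j)
    (x : m → ℝ) (y : n → ℝ) :
    Integrable fun ω => x ⬝ᵥ (M ω *ᵥ y) := by
  have h1 : ∀ ω, x ⬝ᵥ (M ω *ᵥ y) = ∑ i, ∑ j, x i * (M ω i j * y j) := by
    intro ω; simp [dotProduct, mulVec, Finset.mul_sum]
  simp only [h1]
  exact integrable_finset_sum _ (fun i _ => integrable_finset_sum _
    (fun j _ => ((hint i j).mul_const (y j)).const_mul (x i)))

lemma sum_mulVec' {m n ι : Type*} [Fintype n] (s : Finset ι) (M : ι → Matrix m n ℝ)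
    (y : n → ℝ) : (∑ t ∈ s, M t) *ᵥ y = ∑ t ∈ s, (M t) *ᵥ y := by
  classical
  induction s using Finset.cons_induction with
  | empty => simp [Matrix.zero_mulVec]
  | cons a s ha ih => rw [Finset.sum_cons, Finset.sum_cons, Matrix.add_mulVec, ih]

lemma dot_sum {n ι : Type*} [Fintype n] (s : Finset ι) (u : n → ℝ) (w : ι → n → ℝ) :
    u ⬝ᵥ (∑ t ∈ s, w t) = ∑ t ∈ s, u ⬝ᵥ w t := by
  classical
  induction s using Finset.cons_induction with
  | empty => simp
  | cons a s ha ih => rw [Finset.sum_cons, Finset.sum_cons, dotProduct_add, ih]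

lemma matExp_isSymm {Ω : Type*} [MeasureSpace Ω] {m : Type*}
    (M : Ω → Matrix m m ℝ) (h : ∀ᵐ ω, (M ω).IsSymm) : (matExp M).IsSymm := by
  ext i j
  simp only [matExp, Matrix.transpose_apply, Matrix.of_apply]
  refine integral_congr_ae ?_
  filter_upwards [h] with ω hω
  exact congrFun (congrFun hω.eq i) j

end aux

/-- Theorem 1(ii), the Z-estimation efficiency bound at finite `T`:
if `Δ_{T,A}` and `Λ_T` are invertible, then
`Δ_{T,A}⁻¹ Σ_{T,A} (Δ_{T,A}⁻¹)ᵀ − Λ_T⁻¹` is positive semidefinite. -/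
theorem Z_estimation_efficiency_bound
    {Ω : Type*} [MeasureSpace Ω] [IsProbabilityMeasure (volume : Measure Ω)]
    {k q T : ℕ} (hk : 1 ≤ k) (hq : 1 ≤ q) (hT : 1 ≤ T)
    (S : Fin T → Ω → Matrix (Fin k) (Fin k) ℝ)
    (D : Fin T → Ω → Matrix (Fin k) (Fin q) ℝ)
    (A : Fin T → Ω → Matrix (Fin q) (Fin k) ℝ)
    (hSmeas : ∀ t i j, Measurable fun ω => S t ω i j)
    (hDmeas : ∀ t i j, Measurable fun ω => D t ω i j)
    (hAmeas : ∀ t i j, Measurable fun ω => A t ω i j)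
    (hSsymm : ∀ t, ∀ᵐ ω, (S t ω).IsSymm)
    (hSpd : ∀ t, ∀ᵐ ω, (S t ω).PosDef)
    (hint1 : ∀ t i j, Integrable fun ω => (A t ω * S t ω * (A t ω)ᵀ) i j)
    (hint2 : ∀ t i j, Integrable fun ω => (A t ω * D t ω) i j)
    (hint3 : ∀ t i j, Integrable fun ω => ((D t ω)ᵀ * (S t ω)⁻¹ * D t ω) i j)
    (SigT DeltaT LamT : Matrix (Fin q) (Fin q) ℝ)
    (hSig : SigT = (T : ℝ)⁻¹ • ∑ t : Fin T, matExp fun ω => A t ω * S t ω * (A t ω)ᵀ)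
    (hDelta : DeltaT = (T : ℝ)⁻¹ • ∑ t : Fin T, matExp fun ω => A t ω * D t ω)
    (hLam : LamT = (T : ℝ)⁻¹ • ∑ t : Fin T, matExp fun ω => (D t ω)ᵀ * (S t ω)⁻¹ * D t ω)
    (hDeltaInv : IsUnit DeltaT.det) (hLamInv : IsUnit LamT.det) :
    (DeltaT⁻¹ * SigT * (DeltaT⁻¹)ᵀ - LamT⁻¹).PosSemidef := by
  -- quadratic form nonnegativity
  have Qpos : ∀ (x y : Fin q → ℝ),
      0 ≤ x ⬝ᵥ (SigT *ᵥ x) + 2 * (x ⬝ᵥ (DeltaT *ᵥ y)) + y ⬝ᵥ (LamT *ᵥ y) := by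
    intro x y
    have per_t : ∀ t : Fin T,
        0 ≤ x ⬝ᵥ ((matExp fun ω => A t ω * S t ω * (A t ω)ᵀ) *ᵥ x)
          + 2 * (x ⬝ᵥ ((matExp fun ω => A t ω * D t ω) *ᵥ y))
          + y ⬝ᵥ ((matExp fun ω => (D t ω)ᵀ * (S t ω)⁻¹ * D t ω) *ᵥ y) := by
      intro t
      rw [matExp_dot _ (hint1 t) x x, matExp_dot _ (hint2 t) x y, matExp_dot _ (hint3 t) y y]
      have i1 := dot_integrable _ (hint1 t) x x
      have i2 := dot_integrable _ (hint2 t) x y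
      have i3 := dot_integrable _ (hint3 t) y y
      have hpt : (0:ℝ) ≤ ∫ ω, (x ⬝ᵥ ((A t ω * S t ω * (A t ω)ᵀ) *ᵥ x)
          + 2 * (x ⬝ᵥ ((A t ω * D t ω) *ᵥ y))
          + y ⬝ᵥ (((D t ω)ᵀ * (S t ω)⁻¹ * D t ω) *ᵥ y)) := by
        refine integral_nonneg_of_ae ?_
        filter_upwards [hSsymm t, hSpd t] with ω hsym hpd
        exact pointwise_nonneg (S t ω) hpd hsym (A t ω) (D t ω) x y
      have i2' : Integrable (fun ω => 2 * (x ⬝ᵥ ((A t ω * D t ω) *ᵥ y))) volume :=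
        i2.const_mul 2
      have i12 : Integrable (fun ω => x ⬝ᵥ ((A t ω * S t ω * (A t ω)ᵀ) *ᵥ x)
          + 2 * (x ⬝ᵥ ((A t ω * D t ω) *ᵥ y))) volume := i1.add i2'
      rw [integral_add i12 i3, integral_add i1 i2',
        MeasureTheory.integral_const_mul] at hpt
      exact hpt
    have hc : (0:ℝ) ≤ (T : ℝ)⁻¹ := by positivity
    have expand : ∀ (Ms : Fin T → Matrix (Fin q) (Fin q) ℝ) (u v : Fin q → ℝ),
        u ⬝ᵥ (((T : ℝ)⁻¹ • ∑ t : Fin T, Ms t) *ᵥ v)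
          = (T : ℝ)⁻¹ * ∑ t : Fin T, u ⬝ᵥ (Ms t *ᵥ v) := by
      intro Ms u v
      rw [smul_mulVec, dotProduct_smul, sum_mulVec', dot_sum, smul_eq_mul]
    rw [hSig, hDelta, hLam, expand, expand, expand]
    have : ∑ t : Fin T, x ⬝ᵥ ((matExp fun ω => A t ω * S t ω * (A t ω)ᵀ) *ᵥ x)
        + 2 * ∑ t : Fin T, x ⬝ᵥ ((matExp fun ω => A t ω * D t ω) *ᵥ y)
        + ∑ t : Fin T, y ⬝ᵥ ((matExp fun ω => (D t ω)ᵀ * (S t ω)⁻¹ * D t ω) *ᵥ y)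
        = ∑ t : Fin T, (x ⬝ᵥ ((matExp fun ω => A t ω * S t ω * (A t ω)ᵀ) *ᵥ x)
          + 2 * (x ⬝ᵥ ((matExp fun ω => A t ω * D t ω) *ᵥ y))
          + y ⬝ᵥ ((matExp fun ω => (D t ω)ᵀ * (S t ω)⁻¹ * D t ω) *ᵥ y)) := by
      rw [Finset.sum_add_distrib, Finset.sum_add_distrib, Finset.mul_sum]
    have hsum : 0 ≤ ∑ t : Fin T, (x ⬝ᵥ ((matExp fun ω => A t ω * S t ω * (A t ω)ᵀ) *ᵥ x)
          + 2 * (x ⬝ᵥ ((matExp fun ω => A t ω * D t ω) *ᵥ y))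
          + y ⬝ᵥ ((matExp fun ω => (D t ω)ᵀ * (S t ω)⁻¹ * D t ω) *ᵥ y)) :=
      Finset.sum_nonneg fun t _ => per_t t
    calc (0:ℝ) ≤ (T:ℝ)⁻¹ * ∑ t : Fin T, (x ⬝ᵥ ((matExp fun ω => A t ω * S t ω * (A t ω)ᵀ) *ᵥ x)
          + 2 * (x ⬝ᵥ ((matExp fun ω => A t ω * D t ω) *ᵥ y))
          + y ⬝ᵥ ((matExp fun ω => (D t ω)ᵀ * (S t ω)⁻¹ * D t ω) *ᵥ y)) :=
            mul_nonneg hc hsum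
      _ = _ := by rw [← this]; ring
  -- symmetry facts
  have hSigSymm : SigT.IsSymm := by
    rw [hSig]
    refine Matrix.IsSymm.smul ?_ _
    have hsum : ∀ t : Fin T, (matExp fun ω => A t ω * S t ω * (A t ω)ᵀ).IsSymm := by
      intro t
      refine matExp_isSymm _ ?_
      filter_upwards [hSsymm t] with ω hω
      show _ᵀ = _
      rw [transpose_mul, transpose_mul, transpose_transpose, hω.eq, Matrix.mul_assoc]
    show _ᵀ = _
    rw [Matrix.transpose_sum]
    exact Finset.sum_congr rfl fun t _ => (hsum t).eq
  have hLamSymm : LamT.IsSymm := by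
    rw [hLam]
    refine Matrix.IsSymm.smul ?_ _
    have hsum : ∀ t : Fin T, (matExp fun ω => (D t ω)ᵀ * (S t ω)⁻¹ * D t ω).IsSymm := by
      intro t
      refine matExp_isSymm _ ?_
      filter_upwards [hSsymm t] with ω hω
      have hsinv : ((S t ω)⁻¹)ᵀ = (S t ω)⁻¹ := by rw [transpose_nonsing_inv, hω.eq]
      show _ᵀ = _
      rw [transpose_mul, transpose_mul, transpose_transpose, hsinv, Matrix.mul_assoc]
    show _ᵀ = _
    rw [Matrix.transpose_sum]
    exact Finset.sum_congr rfl fun t _ => (hsum t).eq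
  have hLamInvSymm : (LamT⁻¹).IsSymm := by
    show _ᵀ = _
    rw [transpose_nonsing_inv, hLamSymm.eq]
  have hLL : LamT * LamT⁻¹ = 1 := mul_nonsing_inv LamT hLamInv
  have hLL' : LamT⁻¹ * LamT = 1 := nonsing_inv_mul LamT hLamInv
  -- Schur complement is PSD
  set N : Matrix (Fin q) (Fin q) ℝ := SigT - DeltaT * LamT⁻¹ * DeltaTᵀ with hN
  have hNpsd : N.PosSemidef := by
    refine .of_dotProduct_mulVec_nonneg ?_ ?_
    · show Nᴴ = N
      rw [conjTranspose_eq_transpose_of_trivial]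
      rw [hN, transpose_sub, hSigSymm.eq, transpose_mul, transpose_mul, transpose_transpose,
        hLamInvSymm.eq, Matrix.mul_assoc]
    · intro z
      have hz : star z = z := by simp
      rw [hz]
      have hBT : (DeltaT * LamT⁻¹)ᵀ = LamT⁻¹ * DeltaTᵀ := by
        rw [transpose_mul, hLamInvSymm.eq]
      have key := Qpos z (-((DeltaT * LamT⁻¹)ᵀ *ᵥ z))
      have e2 : z ⬝ᵥ (DeltaT *ᵥ (-((DeltaT * LamT⁻¹)ᵀ *ᵥ z)))
          = -(z ⬝ᵥ ((DeltaT * LamT⁻¹ * DeltaTᵀ) *ᵥ z)) := by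
        rw [mulVec_neg, dotProduct_neg, mulVec_mulVec, hBT, ← Matrix.mul_assoc]
      have e3 : (-((DeltaT * LamT⁻¹)ᵀ *ᵥ z)) ⬝ᵥ (LamT *ᵥ (-((DeltaT * LamT⁻¹)ᵀ *ᵥ z)))
          = z ⬝ᵥ ((DeltaT * LamT⁻¹ * DeltaTᵀ) *ᵥ z) := by
        rw [mulVec_neg, dotProduct_neg, neg_dotProduct, neg_neg, dp_aux,
          mulVec_mulVec, mulVec_mulVec, hBT]
        rw [show DeltaT * LamT⁻¹ * LamT * (LamT⁻¹ * DeltaTᵀ) = DeltaT * LamT⁻¹ * DeltaTᵀ by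
          rw [Matrix.mul_assoc DeltaT LamT⁻¹ LamT, hLL', Matrix.mul_one, Matrix.mul_assoc]]
      rw [e2, e3] at key
      rw [hN, sub_mulVec, dotProduct_sub]
      linarith
  have hdetT : IsUnit (DeltaTᵀ).det := by rw [Matrix.det_transpose]; exact hDeltaInv
  have hfinal : DeltaT⁻¹ * SigT * (DeltaT⁻¹)ᵀ - LamT⁻¹ = DeltaT⁻¹ * N * (DeltaT⁻¹)ᵀ := by
    rw [hN, Matrix.mul_sub, Matrix.sub_mul]
    congr 1
    rw [show DeltaT⁻¹ * (DeltaT * LamT⁻¹ * DeltaTᵀ) = LamT⁻¹ * DeltaTᵀ by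
      rw [← Matrix.mul_assoc, ← Matrix.mul_assoc, nonsing_inv_mul DeltaT hDeltaInv,
        Matrix.one_mul]]
    rw [Matrix.mul_assoc, transpose_nonsing_inv, mul_nonsing_inv _ hdetT, Matrix.mul_one]
  rw [hfinal]
  have := hNpsd.mul_mul_conjTranspose_same (DeltaT⁻¹)
  rwa [conjTranspose_eq_transpose_of_trivial] at this
end

section
/- Theorem 1(iii) (strict suboptimality of non-efficient instruments): Suppose Δ_{T,A} and Λ_T are invertible and that for some t ∈ {1,…,T} the instrument deviates from every efficient one with positive probability, i.e., for every invertible deterministic C ∈ ℝ^{q×q} one has ℙ(A_t ≠ C D_tᵀ S_t⁻¹) > 0. Then Δ_{T,A}⁻¹ Σ_{T,A} (Δ_{T,A}⁻¹)ᵀ − Λ_T⁻¹ is positive semidefinite and has a strictly positive diagonal entry; in particular it is nonzero. -/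
set_option linter.unusedSectionVars false
set_option maxHeartbeats 1000000

open MeasureTheory Matrix

section helpers
variable {Ω : Type*} [MeasureSpace Ω] {m n p r : Type*} [Fintype m] [Fintype n] [Fintype p] [Fintype r]

lemma matExp_apply (M : Ω → Matrix m n ℝ) (i : m) (j : n) :
    matExp M i j = ∫ ω, M ω i j := rfl

lemma matExp_congr_ae {M N : Ω → Matrix m n ℝ} (h : ∀ᵐ ω, M ω = N ω) :
    matExp M = matExp N := by
  ext i j
  exact integral_congr_ae (h.mono fun ω hω => show M ω i j = N ω i j by rw [hω])

lemma matExp_transpose (M : Ω → Matrix m n ℝ) :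
    matExp (fun ω => (M ω)ᵀ) = (matExp M)ᵀ := by
  ext i j; rfl

lemma matExp_sub {M N : Ω → Matrix m n ℝ} (hM : ∀ i j, Integrable fun ω => M ω i j)
    (hN : ∀ i j, Integrable fun ω => N ω i j) :
    matExp (fun ω => M ω - N ω) = matExp M - matExp N := by
  ext i j
  simp only [matExp_apply, Matrix.sub_apply]
  exact integral_sub (hM i j) (hN i j)

lemma matExp_add {M N : Ω → Matrix m n ℝ} (hM : ∀ i j, Integrable fun ω => M ω i j)
    (hN : ∀ i j, Integrable fun ω => N ω i j) :
    matExp (fun ω => M ω + N ω) = matExp M + matExp N := by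
  ext i j
  simp only [matExp_apply, Matrix.add_apply]
  exact integral_add (hM i j) (hN i j)


lemma matExp_combo {M1 M2 M3 M4 : Ω → Matrix m n ℝ}
    (h1 : ∀ i j, Integrable fun ω => M1 ω i j) (h2 : ∀ i j, Integrable fun ω => M2 ω i j)
    (h3 : ∀ i j, Integrable fun ω => M3 ω i j) (h4 : ∀ i j, Integrable fun ω => M4 ω i j) :
    matExp (fun ω => M1 ω - M2 ω - M3 ω + M4 ω)
      = matExp M1 - matExp M2 - matExp M3 + matExp M4 := by
  ext i j
  simp only [matExp_apply, Matrix.sub_apply, Matrix.add_apply]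
  have g1 : Integrable (fun ω => M1 ω i j - M2 ω i j) volume := (h1 i j).sub (h2 i j)
  have g2 : Integrable (fun ω => M1 ω i j - M2 ω i j - M3 ω i j) volume := g1.sub (h3 i j)
  rw [integral_add g2 (h4 i j), integral_sub g1 (h3 i j), integral_sub (h1 i j) (h2 i j)]

lemma mul_mul_apply_eq_sum (B : Matrix p m ℝ) (Cm : Matrix n r ℝ) (M : Matrix m n ℝ)
    (i : p) (j : r) :
    (B * M * Cm) i j = ∑ a : m, ∑ b : n, B i a * M a b * Cm b j := by
  simp [Matrix.mul_apply, Finset.sum_mul]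
  rw [Finset.sum_comm]

lemma integral_cmulc (c d : ℝ) (f : Ω → ℝ) (hf : Integrable f) :
    ∫ ω, c * f ω * d = c * (∫ ω, f ω) * d := by
  rw [MeasureTheory.integral_mul_const, MeasureTheory.integral_const_mul]

lemma integrable_mul_mul (B : Matrix p m ℝ) (Cm : Matrix n r ℝ) {M : Ω → Matrix m n ℝ}
    (h : ∀ i j, Integrable fun ω => M ω i j) (i : p) (j : r) :
    Integrable fun ω => (B * M ω * Cm) i j := by
  have : (fun ω => (B * M ω * Cm) i j)
      = fun ω => ∑ a : m, ∑ b : n, B i a * M ω a b * Cm b j := by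
    funext ω; exact mul_mul_apply_eq_sum B Cm (M ω) i j
  rw [this]
  refine integrable_finset_sum _ fun a _ => integrable_finset_sum _ fun b _ => ?_
  simpa [mul_assoc, mul_comm, mul_left_comm] using ((h a b).const_mul (B i a)).mul_const (Cm b j)

lemma matExp_mul_mul (B : Matrix p m ℝ) (Cm : Matrix n r ℝ) {M : Ω → Matrix m n ℝ}
    (h : ∀ i j, Integrable fun ω => M ω i j) :
    matExp (fun ω => B * M ω * Cm) = B * matExp M * Cm := by
  ext i j
  rw [matExp_apply]
  rw [show (B * matExp M * Cm) i j = ∑ a : m, ∑ b : n, B i a * matExp M a b * Cm b j from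
    mul_mul_apply_eq_sum B Cm (matExp M) i j]
  rw [show (fun ω => (B * M ω * Cm) i j)
      = fun ω => ∑ a : m, ∑ b : n, B i a * M ω a b * Cm b j from
    funext fun ω => mul_mul_apply_eq_sum B Cm (M ω) i j]
  rw [integral_finset_sum _ fun a _ => integrable_finset_sum _ fun b _ =>
    (((h a b).const_mul (B i a)).mul_const (Cm b j))]
  refine Finset.sum_congr rfl fun a _ => ?_
  rw [integral_finset_sum _ fun b _ => (((h a b).const_mul (B i a)).mul_const (Cm b j))]
  exact Finset.sum_congr rfl fun b _ => integral_cmulc _ _ _ (h a b)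

lemma matExp_posSemidef {M : Ω → Matrix n n ℝ} (hps : ∀ᵐ ω, (M ω).PosSemidef)
    (h : ∀ i j, Integrable fun ω => M ω i j) : (matExp M).PosSemidef := by
  have hquad : ∀ x : n → ℝ, x ⬝ᵥ (matExp M) *ᵥ x = ∫ ω, x ⬝ᵥ (M ω) *ᵥ x := by
    intro x
    have this : ∀ N : Matrix n n ℝ, x ⬝ᵥ N *ᵥ x = ∑ a : n, ∑ b : n, x a * N a b * x b := by
      intro N
      simp [dotProduct, Matrix.mulVec, Finset.mul_sum, mul_assoc]
    rw [this]
    rw [show (fun ω => x ⬝ᵥ (M ω) *ᵥ x) = fun ω => ∑ a : n, ∑ b : n, x a * M ω a b * x b from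
      funext fun ω => this (M ω)]
    rw [integral_finset_sum _ fun a _ => integrable_finset_sum _ fun b _ =>
      (((h a b).const_mul (x a)).mul_const (x b))]
    refine Finset.sum_congr rfl fun a _ => ?_
    rw [integral_finset_sum _ fun b _ => (((h a b).const_mul (x a)).mul_const (x b))]
    exact Finset.sum_congr rfl fun b _ => (integral_cmulc _ _ _ (h a b)).symm
  refine posSemidef_iff_dotProduct_mulVec.mpr ⟨?_, ?_⟩
  · ext i j
    simp only [conjTranspose_apply, star_trivial, matExp_apply]
    refine integral_congr_ae (hps.mono fun ω hω => ?_)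
    have h1 := hω.1
    calc M ω j i = (M ω)ᴴ i j := by simp [conjTranspose_apply]
    _ = M ω i j := by rw [h1]
  · intro x
    simp only [star_trivial]
    rw [hquad]
    refine integral_nonneg_of_ae (hps.mono fun ω hω => ?_)
    simpa using hω.dotProduct_mulVec_nonneg x

lemma posSemidef_diag_nonneg {M : Matrix n n ℝ} [DecidableEq n] (h : M.PosSemidef) (j : n) :
    0 ≤ M j j := by
  simpa [dotProduct, Matrix.mulVec, Pi.single_apply] using h.dotProduct_mulVec_nonneg (Pi.single j 1)

lemma posSemidef_smul_sum {ι : Type*} (s : Finset ι) (E : ι → Matrix n n ℝ) (c : ℝ) (hc : 0 ≤ c)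
    (h : ∀ t ∈ s, (E t).PosSemidef) : (c • ∑ t ∈ s, E t).PosSemidef := by
  have hmv : ∀ (N : Matrix n n ℝ) (x : n → ℝ),
      x ⬝ᵥ N *ᵥ x = ∑ a : n, ∑ b : n, x a * N a b * x b := by
    intro N x
    simp [dotProduct, Matrix.mulVec, Finset.mul_sum, mul_assoc]
  refine posSemidef_iff_dotProduct_mulVec.mpr ⟨?_, ?_⟩
  · show (c • ∑ t ∈ s, E t)ᴴ = _
    ext i j
    simp only [conjTranspose_apply, star_trivial, Matrix.smul_apply, Matrix.sum_apply,
      smul_eq_mul]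
    congr 1
    refine Finset.sum_congr rfl fun t ht => ?_
    have h1 := (h t ht).1
    calc E t j i = (E t)ᴴ i j := by simp [conjTranspose_apply]
    _ = E t i j := by rw [h1]
  · intro x
    simp only [star_trivial, smul_mulVec, dotProduct_smul, smul_eq_mul]
    refine mul_nonneg hc ?_
    rw [hmv]
    have hsw : ∀ a b : n, x a * (∑ t ∈ s, E t) a b * x b
        = ∑ t ∈ s, x a * E t a b * x b := by
      intro a b
      simp [Matrix.sum_apply, Finset.sum_mul, Finset.mul_sum]
    simp_rw [hsw]
    rw [show (∑ a : n, ∑ b : n, ∑ t ∈ s, x a * E t a b * x b)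
        = ∑ t ∈ s, ∑ a : n, ∑ b : n, x a * E t a b * x b from by
      rw [Finset.sum_congr rfl fun a _ => Finset.sum_comm, Finset.sum_comm]]
    refine Finset.sum_nonneg fun t ht => ?_
    rw [← hmv]
    simpa using (h t ht).dotProduct_mulVec_nonneg x

end helpers

/-- Theorem 1(iii): if for some `t` the instrument matrix deviates with
positive probability from every efficient instrument `C Dᵀ S⁻¹` (for every deterministic
invertible `C`), then `Δ_{T,A}⁻¹ Σ_{T,A} (Δ_{T,A}⁻¹)ᵀ − Λ_T⁻¹` is positive semidefinite
with a strictly positive diagonal entry; in particular it is nonzero. -/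
theorem strict_suboptimality_of_inefficient_instruments
    {Ω : Type*} [MeasureSpace Ω] [IsProbabilityMeasure (volume : Measure Ω)]
    {k q T : ℕ} (hk : 1 ≤ k) (hq : 1 ≤ q) (hT : 1 ≤ T)
    (S : Fin T → Ω → Matrix (Fin k) (Fin k) ℝ)
    (D : Fin T → Ω → Matrix (Fin k) (Fin q) ℝ)
    (A : Fin T → Ω → Matrix (Fin q) (Fin k) ℝ)
    (hSmeas : ∀ t i j, Measurable fun ω => S t ω i j)
    (hDmeas : ∀ t i j, Measurable fun ω => D t ω i j)
    (hAmeas : ∀ t i j, Measurable fun ω => A t ω i j)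
    (hSsymm : ∀ t, ∀ᵐ ω, (S t ω).IsSymm)
    (hSpd : ∀ t, ∀ᵐ ω, (S t ω).PosDef)
    (hint1 : ∀ t i j, Integrable fun ω => (A t ω * S t ω * (A t ω)ᵀ) i j)
    (hint2 : ∀ t i j, Integrable fun ω => (A t ω * D t ω) i j)
    (hint3 : ∀ t i j, Integrable fun ω => ((D t ω)ᵀ * (S t ω)⁻¹ * D t ω) i j)
    (SigT DeltaT LamT : Matrix (Fin q) (Fin q) ℝ)
    (hSig : SigT = (T : ℝ)⁻¹ • ∑ t : Fin T, matExp fun ω => A t ω * S t ω * (A t ω)ᵀ)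
    (hDelta : DeltaT = (T : ℝ)⁻¹ • ∑ t : Fin T, matExp fun ω => A t ω * D t ω)
    (hLam : LamT = (T : ℝ)⁻¹ • ∑ t : Fin T, matExp fun ω => (D t ω)ᵀ * (S t ω)⁻¹ * D t ω)
    (hDeltaInv : IsUnit DeltaT.det) (hLamInv : IsUnit LamT.det)
    (hdev : ∃ t : Fin T, ∀ C : Matrix (Fin q) (Fin q) ℝ, IsUnit C.det →
      0 < volume {ω | A t ω ≠ C * (D t ω)ᵀ * (S t ω)⁻¹}) :
    (DeltaT⁻¹ * SigT * (DeltaT⁻¹)ᵀ - LamT⁻¹).PosSemidef ∧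
      (∃ j, 0 < (DeltaT⁻¹ * SigT * (DeltaT⁻¹)ᵀ - LamT⁻¹) j j) ∧
      DeltaT⁻¹ * SigT * (DeltaT⁻¹)ᵀ - LamT⁻¹ ≠ 0 := by
  -- LamT is symmetric
  have hLamSymm : LamTᵀ = LamT := by
    rw [hLam, Matrix.transpose_smul, Matrix.transpose_sum]
    congr 1
    refine Finset.sum_congr rfl fun t _ => ?_
    rw [← matExp_transpose]
    refine matExp_congr_ae ?_
    filter_upwards [hSsymm t] with ω hsym
    rw [Matrix.transpose_mul, Matrix.transpose_mul, Matrix.transpose_transpose,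
      Matrix.transpose_nonsing_inv, hsym.eq, Matrix.mul_assoc]
  have hLinvSymm : (LamT⁻¹)ᵀ = LamT⁻¹ := by
    rw [Matrix.transpose_nonsing_inv, hLamSymm]
  -- the deviation process
  set X : Fin T → Ω → Matrix (Fin q) (Fin k) ℝ :=
    fun t ω => DeltaT⁻¹ * A t ω - LamT⁻¹ * ((D t ω)ᵀ * (S t ω)⁻¹) with hX
  set F : Fin T → Ω → Matrix (Fin q) (Fin q) ℝ := fun t ω =>
    DeltaT⁻¹ * (A t ω * S t ω * (A t ω)ᵀ) * (DeltaT⁻¹)ᵀ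
      - DeltaT⁻¹ * (A t ω * D t ω) * LamT⁻¹
      - LamT⁻¹ * (A t ω * D t ω)ᵀ * (DeltaT⁻¹)ᵀ
      + LamT⁻¹ * ((D t ω)ᵀ * (S t ω)⁻¹ * D t ω) * LamT⁻¹ with hF
  -- pointwise algebraic identity
  have hXF : ∀ t, ∀ᵐ ω, X t ω * S t ω * (X t ω)ᵀ = F t ω := by
    intro t
    filter_upwards [hSsymm t, hSpd t] with ω hsym hpd
    have hSu : IsUnit (S t ω).det := hpd.det_pos.ne'.isUnit
    have hSinvT : ((S t ω)⁻¹)ᵀ = (S t ω)⁻¹ := by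
      rw [Matrix.transpose_nonsing_inv, hsym.eq]
    simp only [hX, hF, Matrix.sub_mul, Matrix.mul_sub, Matrix.transpose_sub,
      Matrix.transpose_mul, Matrix.transpose_transpose, hSinvT, hLinvSymm]
    simp only [Matrix.mul_assoc]
    rw [Matrix.mul_nonsing_inv_cancel_left _ _ hSu,
        Matrix.nonsing_inv_mul_cancel_left _ _ hSu]
    abel
  -- integrability of the entries of F
  have hFint : ∀ t i j, Integrable fun ω => F t ω i j := by
    intro t i j
    have h1 := integrable_mul_mul DeltaT⁻¹ (DeltaT⁻¹)ᵀ (hint1 t) i j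
    have h2 := integrable_mul_mul DeltaT⁻¹ LamT⁻¹ (hint2 t) i j
    have h3 := integrable_mul_mul LamT⁻¹ (DeltaT⁻¹)ᵀ
      (M := fun ω => (A t ω * D t ω)ᵀ) (fun i j => hint2 t j i) i j
    have h4 := integrable_mul_mul LamT⁻¹ LamT⁻¹ (hint3 t) i j
    have : (fun ω => F t ω i j) = fun ω =>
        (DeltaT⁻¹ * (A t ω * S t ω * (A t ω)ᵀ) * (DeltaT⁻¹)ᵀ) i j
          - (DeltaT⁻¹ * (A t ω * D t ω) * LamT⁻¹) i j
          - (LamT⁻¹ * (A t ω * D t ω)ᵀ * (DeltaT⁻¹)ᵀ) i j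
          + (LamT⁻¹ * ((D t ω)ᵀ * (S t ω)⁻¹ * D t ω) * LamT⁻¹) i j := by
      funext ω; simp [hF, Matrix.sub_apply, Matrix.add_apply]
    rw [this]
    exact ((h1.sub h2).sub h3).add h4
  -- integrability of the entries of X S Xᵀ
  have hXint : ∀ t i j, Integrable fun ω => (X t ω * S t ω * (X t ω)ᵀ) i j := by
    intro t i j
    refine (hFint t i j).congr ?_
    filter_upwards [hXF t] with ω hω
    rw [hω]
  -- matExp of each term
  have h1exp : ∀ t, matExp (fun ω => X t ω * S t ω * (X t ω)ᵀ)
      = DeltaT⁻¹ * matExp (fun ω => A t ω * S t ω * (A t ω)ᵀ) * (DeltaT⁻¹)ᵀ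
        - DeltaT⁻¹ * matExp (fun ω => A t ω * D t ω) * LamT⁻¹
        - LamT⁻¹ * (matExp (fun ω => A t ω * D t ω))ᵀ * (DeltaT⁻¹)ᵀ
        + LamT⁻¹ * matExp (fun ω => (D t ω)ᵀ * (S t ω)⁻¹ * D t ω) * LamT⁻¹ := by
    intro t
    rw [matExp_congr_ae (hXF t)]
    have hi1 := fun i j => integrable_mul_mul DeltaT⁻¹ (DeltaT⁻¹)ᵀ (hint1 t) i j
    have hi2 := fun i j => integrable_mul_mul DeltaT⁻¹ LamT⁻¹ (hint2 t) i j
    have hi3 := fun i j => integrable_mul_mul LamT⁻¹ (DeltaT⁻¹)ᵀ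
      (M := fun ω => (A t ω * D t ω)ᵀ) (fun i j => hint2 t j i) i j
    have hi4 := fun i j => integrable_mul_mul LamT⁻¹ LamT⁻¹ (hint3 t) i j
    simp only [hF]
    rw [matExp_combo
      (M1 := fun ω => DeltaT⁻¹ * (A t ω * S t ω * (A t ω)ᵀ) * (DeltaT⁻¹)ᵀ)
      (M2 := fun ω => DeltaT⁻¹ * (A t ω * D t ω) * LamT⁻¹)
      (M3 := fun ω => LamT⁻¹ * (A t ω * D t ω)ᵀ * (DeltaT⁻¹)ᵀ)
      (M4 := fun ω => LamT⁻¹ * ((D t ω)ᵀ * (S t ω)⁻¹ * D t ω) * LamT⁻¹)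
      hi1 hi2 hi3 hi4]
    rw [matExp_mul_mul DeltaT⁻¹ (DeltaT⁻¹)ᵀ (hint1 t),
      matExp_mul_mul DeltaT⁻¹ LamT⁻¹ (hint2 t),
      matExp_mul_mul LamT⁻¹ (DeltaT⁻¹)ᵀ (M := fun ω => (A t ω * D t ω)ᵀ)
        (fun i j => hint2 t j i),
      matExp_mul_mul LamT⁻¹ LamT⁻¹ (hint3 t),
      matExp_transpose (fun ω => A t ω * D t ω)]
  -- the key representation
  have hsum : DeltaT⁻¹ * SigT * (DeltaT⁻¹)ᵀ - LamT⁻¹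
      = (T : ℝ)⁻¹ • ∑ t : Fin T, matExp (fun ω => X t ω * S t ω * (X t ω)ᵀ) := by
    have : ∑ t : Fin T, matExp (fun ω => X t ω * S t ω * (X t ω)ᵀ)
        = DeltaT⁻¹ * (∑ t : Fin T, matExp (fun ω => A t ω * S t ω * (A t ω)ᵀ)) * (DeltaT⁻¹)ᵀ
          - DeltaT⁻¹ * (∑ t : Fin T, matExp (fun ω => A t ω * D t ω)) * LamT⁻¹
          - LamT⁻¹ * (∑ t : Fin T, matExp (fun ω => A t ω * D t ω))ᵀ * (DeltaT⁻¹)ᵀ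
          + LamT⁻¹ * (∑ t : Fin T, matExp (fun ω => (D t ω)ᵀ * (S t ω)⁻¹ * D t ω)) * LamT⁻¹ := by
      rw [Finset.sum_congr rfl fun t _ => h1exp t]
      simp only [Finset.sum_sub_distrib, Finset.sum_add_distrib, Matrix.sum_mul,
        Matrix.mul_sum, Matrix.transpose_sum]
    rw [this]
    have e1 : DeltaT⁻¹ * SigT * (DeltaT⁻¹)ᵀ
        = (T : ℝ)⁻¹ • (DeltaT⁻¹ * (∑ t : Fin T, matExp (fun ω => A t ω * S t ω * (A t ω)ᵀ)) * (DeltaT⁻¹)ᵀ) := by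
      rw [hSig]; simp [Matrix.mul_assoc]
    have e2 : LamT⁻¹
        = (T : ℝ)⁻¹ • (DeltaT⁻¹ * (∑ t : Fin T, matExp (fun ω => A t ω * D t ω)) * LamT⁻¹) := by
      have h0 : DeltaT⁻¹ * DeltaT * LamT⁻¹ = LamT⁻¹ := by
        rw [Matrix.nonsing_inv_mul _ hDeltaInv, Matrix.one_mul]
      conv_lhs => rw [← h0]
      rw [hDelta]
      simp [Matrix.mul_assoc]
    have e3 : LamT⁻¹
        = (T : ℝ)⁻¹ • (LamT⁻¹ * (∑ t : Fin T, matExp (fun ω => A t ω * D t ω))ᵀ * (DeltaT⁻¹)ᵀ) := by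
      have hdT : IsUnit DeltaTᵀ.det := by rwa [Matrix.det_transpose]
      have h0 : LamT⁻¹ * DeltaTᵀ * (DeltaT⁻¹)ᵀ = LamT⁻¹ := by
        rw [Matrix.mul_assoc, Matrix.transpose_nonsing_inv,
          Matrix.mul_nonsing_inv _ hdT, Matrix.mul_one]
      conv_lhs => rw [← h0]
      rw [hDelta]
      simp [Matrix.transpose_smul, Matrix.mul_assoc]
    have e4 : LamT⁻¹
        = (T : ℝ)⁻¹ • (LamT⁻¹ * (∑ t : Fin T, matExp (fun ω => (D t ω)ᵀ * (S t ω)⁻¹ * D t ω)) * LamT⁻¹) := by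
      have h0 : LamT⁻¹ * LamT * LamT⁻¹ = LamT⁻¹ := by
        rw [Matrix.nonsing_inv_mul _ hLamInv, Matrix.one_mul]
      conv_lhs => rw [← h0]
      rw [hLam]
      simp [Matrix.mul_assoc]
    rw [smul_add, smul_sub, smul_sub, ← e1, ← e2, ← e3, ← e4]
    abel
  -- positive semidefiniteness of each summand
  have hPSDt : ∀ t, (matExp (fun ω => X t ω * S t ω * (X t ω)ᵀ)).PosSemidef := by
    intro t
    refine matExp_posSemidef ?_ (hXint t)
    filter_upwards [hSpd t] with ω hpd
    have := hpd.posSemidef.mul_mul_conjTranspose_same (X t ω)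
    rwa [conjTranspose_eq_transpose_of_trivial] at this
  have hTnn : (0:ℝ) ≤ (T : ℝ)⁻¹ := by positivity
  have hPSD : (DeltaT⁻¹ * SigT * (DeltaT⁻¹)ᵀ - LamT⁻¹).PosSemidef := by
    rw [hsum]
    exact posSemidef_smul_sum _ _ _ hTnn fun t _ => hPSDt t
  refine ⟨hPSD, ?_⟩
  -- strict positivity of some diagonal entry
  obtain ⟨t, hdt⟩ := hdev
  have hdiag : ∃ j, 0 < (DeltaT⁻¹ * SigT * (DeltaT⁻¹)ᵀ - LamT⁻¹) j j := by
    by_contra hcon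
    push_neg at hcon
    have hzero : ∀ j, (DeltaT⁻¹ * SigT * (DeltaT⁻¹)ᵀ - LamT⁻¹) j j = 0 :=
      fun j => le_antisymm (hcon j) (posSemidef_diag_nonneg hPSD j)
    -- each diagonal entry of each summand vanishes
    have hEt0 : ∀ j, matExp (fun ω => X t ω * S t ω * (X t ω)ᵀ) j j = 0 := by
      intro j
      have hj := hzero j
      rw [hsum] at hj
      have hTne : ((T:ℝ))⁻¹ ≠ 0 := inv_ne_zero (Nat.cast_ne_zero.mpr (by omega))
      have h2 : (∑ s : Fin T, matExp (fun ω => X s ω * S s ω * (X s ω)ᵀ)) j j = 0 := by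
        have h3 : (T : ℝ)⁻¹ * (∑ s : Fin T, matExp (fun ω => X s ω * S s ω * (X s ω)ᵀ)) j j = 0 := hj
        exact (mul_eq_zero.mp h3).resolve_left hTne
      have h4 : ∑ s : Fin T, (matExp (fun ω => X s ω * S s ω * (X s ω)ᵀ)) j j = 0 := by
        rw [← h2]; simp [Matrix.sum_apply]
      exact (Finset.sum_eq_zero_iff_of_nonneg
        (fun s _ => posSemidef_diag_nonneg (hPSDt s) j)).mp h4 t (Finset.mem_univ t)
    -- hence the integrand vanishes a.e.
    have hae0 : ∀ j, ∀ᵐ ω, (X t ω * S t ω * (X t ω)ᵀ) j j = 0 := by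
      intro j
      have hnn : 0 ≤ᵐ[volume] fun ω => (X t ω * S t ω * (X t ω)ᵀ) j j := by
        filter_upwards [hSpd t] with ω hpd
        have := hpd.posSemidef.mul_mul_conjTranspose_same (X t ω)
        rw [conjTranspose_eq_transpose_of_trivial] at this
        exact posSemidef_diag_nonneg this j
      have := (integral_eq_zero_iff_of_nonneg_ae hnn (hXint t j j)).mp (hEt0 j)
      filter_upwards [this] with ω hω
      exact hω
    have haeall : ∀ᵐ ω, ∀ j, (X t ω * S t ω * (X t ω)ᵀ) j j = 0 := ae_all_iff.mpr hae0
    -- hence X t ω = 0 a.e.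
    have hX0 : ∀ᵐ ω, X t ω = 0 := by
      filter_upwards [haeall, hSpd t] with ω hd hpd
      ext j i
      by_contra hne
      have hv : (fun i => X t ω j i) ≠ 0 := by
        intro h0
        exact hne (by simpa using congrFun h0 i)
      have hpos := hpd.dotProduct_mulVec_pos hv
      simp only [star_trivial] at hpos
      have heq : (X t ω * S t ω * (X t ω)ᵀ) j j
          = (fun i => X t ω j i) ⬝ᵥ (S t ω) *ᵥ (fun i => X t ω j i) := by
        simp [Matrix.mul_apply, dotProduct, Matrix.mulVec, Finset.sum_mul, Finset.mul_sum,
          mul_assoc, Matrix.transpose_apply]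
        rw [Finset.sum_comm]
      rw [hd j] at heq
      rw [← heq] at hpos
      exact lt_irrefl _ hpos
    -- derive a.e. equality with an efficient instrument
    set C := DeltaT * LamT⁻¹ with hC
    have hCdet : IsUnit C.det := by
      rw [hC, Matrix.det_mul]
      exact hDeltaInv.mul (Matrix.isUnit_nonsing_inv_det _ hLamInv)
    have haeA : ∀ᵐ ω, A t ω = C * (D t ω)ᵀ * (S t ω)⁻¹ := by
      filter_upwards [hX0] with ω h0
      have := sub_eq_zero.mp h0
      have h2 : DeltaT * (DeltaT⁻¹ * A t ω) = DeltaT * (LamT⁻¹ * ((D t ω)ᵀ * (S t ω)⁻¹)) := by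
        rw [this]
      rw [Matrix.mul_nonsing_inv_cancel_left _ _ hDeltaInv] at h2
      rw [h2, hC]
      simp only [Matrix.mul_assoc]
    have hnull : volume {ω | A t ω ≠ C * (D t ω)ᵀ * (S t ω)⁻¹} = 0 := by
      have := haeA
      rw [MeasureTheory.ae_iff] at this
      exact this
    have := hdt C hCdet
    rw [hnull] at this
    exact lt_irrefl _ this
  obtain ⟨j, hj⟩ := hdiag
  refine ⟨⟨j, hj⟩, ?_⟩
  intro h0
  rw [h0] at hj
  simp at hj
end

section
/- Random eigenvalue lemma: Let (Ω, 𝒜, ℙ) be a probability space, n ≥ 1, C ∈ ℝ^{n×n} a deterministic matrix, and ξ : Ω → ℝ, V : Ω → ℝ^n measurable maps with V(ω) ≠ 0 for ℙ-a.e. ω and ξ(ω) · V(ω) = C V(ω) for ℙ-a.e. ω. Assume the richness condition: for every measurable set B ⊆ Ω with ℙ(B) = 1 there exist n+1 pairwise distinct vectors in the image {V(ω) : ω ∈ B} such that every n of them are linearly independent. Then there exists a constant c ∈ ℝ such that ξ = c ℙ-a.s., and C = c · I_n. -/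
open MeasureTheory Matrix

/-- Richness condition (condition (DQ2)/(QES2) of the paper): for every measurable set `B`
of full probability there are `n + 1` pairwise distinct vectors in the image `{V ω : ω ∈ B}`
such that every `n` of them are linearly independent. -/
def Rich {Ω : Type*} [MeasureSpace Ω] {n : ℕ} (V : Ω → Fin n → ℝ) : Prop :=
  ∀ B : Set Ω, MeasurableSet B → volume B = 1 →
    ∃ v : Fin (n + 1) → Fin n → ℝ, Function.Injective v ∧
      (∀ i, ∃ ω ∈ B, V ω = v i) ∧
      ∀ i : Fin (n + 1),
        LinearIndependent ℝ fun j : {j : Fin (n + 1) // j ≠ i} => v j.1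

private lemma aux_sum_subtype_ne {m : ℕ} {M : Type*} [AddCommMonoid M]
    (f : Fin m → M) (j : Fin m) :
    (∑ k : {k : Fin m // k ≠ j}, f k.1) + f j = ∑ k, f k := by
  rw [← Finset.sum_erase_add Finset.univ f (Finset.mem_univ j)]
  congr 1
  exact (Finset.sum_subtype _ (fun x => by simp) f).symm

/-- Random eigenvalue lemma: if `ξ(ω) • V(ω) = C V(ω)` a.s. with `V ≠ 0`
a.s. and the image of `V` is rich, then `ξ` is a.s. equal to some constant `c` and
`C = c • I`. -/
theorem random_eigenvalue_lemma
    {Ω : Type*} [MeasureSpace Ω] [IsProbabilityMeasure (volume : Measure Ω)]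
    {n : ℕ} (hn : 1 ≤ n)
    (C : Matrix (Fin n) (Fin n) ℝ)
    (ξ : Ω → ℝ) (V : Ω → Fin n → ℝ)
    (hξmeas : Measurable ξ) (hVmeas : Measurable V)
    (hVne : ∀ᵐ ω, V ω ≠ 0)
    (heig : ∀ᵐ ω, ξ ω • V ω = C.mulVec (V ω))
    (hrich : Rich V) :
    ∃ c : ℝ, (∀ᵐ ω, ξ ω = c) ∧ C = c • (1 : Matrix (Fin n) (Fin n) ℝ) := by
  classical
  set B : Set Ω := {ω | V ω ≠ 0 ∧ ξ ω • V ω = C.mulVec (V ω)} with hBdef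
  have hsmul : Measurable fun ω => ξ ω • V ω := by
    apply measurable_pi_lambda
    intro i
    exact hξmeas.mul ((measurable_pi_apply i).comp hVmeas)
  have hmul : Measurable fun ω => C.mulVec (V ω) :=
    (C.mulVecLin.continuous_of_finiteDimensional.measurable).comp hVmeas
  have hBmeas : MeasurableSet B := by
    have h1 : MeasurableSet {ω | V ω ≠ 0} :=
      (hVmeas (measurableSet_singleton 0)).compl
    have h2 : MeasurableSet {ω | ξ ω • V ω = C.mulVec (V ω)} :=
      measurableSet_eq_fun hsmul hmul
    exact h1.inter h2
  have hBae : ∀ᵐ ω, ω ∈ B := by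
    filter_upwards [hVne, heig] with ω h1 h2
    exact ⟨h1, h2⟩
  have hB1 : volume B = 1 := by
    have h0 : volume Bᶜ = 0 := by
      rw [ae_iff] at hBae
      exact hBae
    have := measure_add_measure_compl (μ := volume) hBmeas
    rw [h0, add_zero, measure_univ] at this
    exact this
  obtain ⟨v, hvinj, hvim, hvind⟩ := hrich B hBmeas hB1
  choose w hwB hwV using hvim
  set l : Fin (n + 1) → ℝ := fun i => ξ (w i) with hl
  have heigv : ∀ i, C.mulVec (v i) = l i • v i := by
    intro i
    rw [← hwV i]
    exact ((hwB i).2).symm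
  -- the n+1 vectors are linearly dependent
  have hnotind : ¬ LinearIndependent ℝ v := by
    intro h
    have := h.fintype_card_le_finrank
    simp [Module.finrank_fin_fun] at this
  obtain ⟨g, hg0, i₁, hgi₁⟩ := Fintype.not_linearIndependent_iff.mp hnotind
  -- all coefficients are nonzero
  have hgne : ∀ j, g j ≠ 0 := by
    intro j hj
    have hsum : ∑ k : {k : Fin (n + 1) // k ≠ j}, g k.1 • v k.1 = 0 := by
      have := aux_sum_subtype_ne (fun k => g k • v k) j
      rw [hg0, hj, zero_smul, add_zero] at this
      exact this
    have hz := Fintype.linearIndependent_iff.mp (hvind j) (fun k => g k.1) hsum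
    rcases eq_or_ne i₁ j with h' | h'
    · exact hgi₁ (h' ▸ hj)
    · exact hgi₁ (hz ⟨i₁, h'⟩)
  -- all eigenvalues are equal to c := l i₁
  set c : ℝ := l i₁ with hc
  have hlc : ∀ i, l i = c := by
    intro i
    rcases eq_or_ne i i₁ with h | h
    · rw [h]
    -- ∑ (g k * l k) • v k = 0
    have h1 : ∑ k, (g k * l k) • v k = 0 := by
      have := congrArg C.mulVecLin hg0
      rw [map_sum, map_zero] at this
      simpa [mulVecLin_apply, heigv, smul_smul] using this
    have h2 : ∑ k, (g k * (l k - c)) • v k = 0 := by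
      have : ∀ k, (g k * (l k - c)) • v k
          = (g k * l k) • v k - c • (g k • v k) := by
        intro k
        rw [smul_smul, mul_sub, sub_smul]
        ring_nf
      rw [Finset.sum_congr rfl (fun k _ => this k), Finset.sum_sub_distrib,
        ← Finset.smul_sum, h1, hg0, smul_zero, sub_zero]
    have hsub : ∑ k : {k : Fin (n + 1) // k ≠ i₁}, (g k.1 * (l k.1 - c)) • v k.1 = 0 := by
      have := aux_sum_subtype_ne (fun k => (g k * (l k - c)) • v k) i₁
      rw [h2, sub_self, mul_zero, zero_smul, add_zero] at this
      exact this
    have hz := Fintype.linearIndependent_iff.mp (hvind i₁)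
      (fun k => g k.1 * (l k.1 - c)) hsub ⟨i, h⟩
    have := (mul_eq_zero.mp hz).resolve_left (hgne i)
    linarith [sub_eq_zero.mp this]
  -- build a basis from n of the vectors
  haveI : Nonempty {k : Fin (n + 1) // k ≠ i₁} := by
    rcases eq_or_ne i₁ 0 with h | h
    · exact ⟨⟨Fin.last n, by simp [h]; omega⟩⟩
    · exact ⟨⟨0, Ne.symm h⟩⟩
  have hcard : Fintype.card {k : Fin (n + 1) // k ≠ i₁} = Module.finrank ℝ (Fin n → ℝ) := by
    simp [Module.finrank_fin_fun, Fintype.card_subtype_compl]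
  set b := basisOfLinearIndependentOfCardEqFinrank (hvind i₁) hcard with hb
  have hbcoe : ∀ k : {k : Fin (n + 1) // k ≠ i₁}, b k = v k.1 := by
    intro k
    rw [hb, coe_basisOfLinearIndependentOfCardEqFinrank]
  have hC : C = c • (1 : Matrix (Fin n) (Fin n) ℝ) := by
    have : Matrix.toLin' C = Matrix.toLin' (c • (1 : Matrix (Fin n) (Fin n) ℝ)) := by
      apply b.ext
      intro k
      rw [Matrix.toLin'_apply, Matrix.toLin'_apply, hbcoe k, heigv, hlc]
      simp [Matrix.smul_mulVec, Matrix.one_mulVec]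
    exact Matrix.toLin'.injective this
  refine ⟨c, ?_, hC⟩
  filter_upwards [hVne, heig] with ω h1 h2
  rw [hC] at h2
  have h3 : ξ ω • V ω = c • V ω := by
    rw [h2]
    simp [Matrix.smul_mulVec, Matrix.one_mulVec]
  have h4 : (ξ ω - c) • V ω = 0 := by
    rw [sub_smul, h3, sub_self]
  rcases smul_eq_zero.mp h4 with h5 | h5
  · linarith [sub_eq_zero.mp (by exact h5)]
  · exact absurd h5 h1
end

section
/- If-direction of Theorem 2(A) (the pseudo-efficient M-estimator attains the efficient instruments): In the double-quantile block setup, assume q₁ = q₂ and V_α = V_β =: V ℙ-a.s. (equal model gradients), and suppose there exist constants c₁, c₂, c₃ > 0 such that, ℙ-a.s., f_α = c₁ f_β, w₁ = c₂ f_α, and w₂ = c₃ f_β (conditions (13)–(15) of the paper). Then the deterministic block matrix C := [[α(1−α)c₂ I_{q₁}, α(1−β)c₁c₂ I_{q₁}], [α(1−β)(c₃/c₁) I_{q₁}, β(1−β)c₃ I_{q₁}]] ∈ ℝ^{2q₁×2q₁} is invertible, with determinant (α c₂ c₃ (1−β)(β−α))^{q₁} ≠ 0, and satisfies A_g = C Dᵀ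 S⁻¹ ℙ-a.s. -/
open MeasureTheory Matrix

/-- The matrix `D` of the double-quantile block setup: first row `(f_α V_αᵀ, 0)`,
second row `(0, f_β V_βᵀ)`. -/
def dqD {q₁ q₂ : ℕ} (fα fβ : ℝ) (Vα : Fin q₁ → ℝ) (Vβ : Fin q₂ → ℝ) :
    Matrix (Fin 2) (Fin q₁ ⊕ Fin q₂) ℝ :=
  Matrix.of fun i j =>
    Sum.elim (fun j₁ => if i = 0 then fα * Vα j₁ else 0)
      (fun j₂ => if i = 1 then fβ * Vβ j₂ else 0) j

/-- The M-estimator instrument matrix `A_g` of the double-quantile block setup: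
first column `(w₁ V_α, 0)ᵀ`, second column `(0, w₂ V_β)ᵀ`. -/
def dqA {q₁ q₂ : ℕ} (w₁ w₂ : ℝ) (Vα : Fin q₁ → ℝ) (Vβ : Fin q₂ → ℝ) :
    Matrix (Fin q₁ ⊕ Fin q₂) (Fin 2) ℝ :=
  Matrix.of fun i j =>
    Sum.elim (fun i₁ => if j = 0 then w₁ * Vα i₁ else 0)
      (fun i₂ => if j = 1 then w₂ * Vβ i₂ else 0) i

/-- If-direction of Theorem 2(A): under equal model gradients and the
conditions (13)–(15) of the paper, the explicit block matrix `C` is invertible with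
determinant `(α c₂ c₃ (1−β)(β−α))^{q₁}` and satisfies `A_g = C Dᵀ S⁻¹` ℙ-a.s. -/
theorem dq_pseudo_efficient_attains
    {Ω : Type*} [MeasureSpace Ω] [IsProbabilityMeasure (volume : Measure Ω)]
    {q₁ : ℕ} (hq₁ : 1 ≤ q₁)
    {α β : ℝ} (hα : 0 < α) (hαβ : α < β) (hβ : β < 1)
    (Vα Vβ : Ω → Fin q₁ → ℝ) (fα fβ w₁ w₂ : Ω → ℝ)
    (hVαmeas : Measurable Vα) (hVβmeas : Measurable Vβ)
    (hfαmeas : Measurable fα) (hfβmeas : Measurable fβ)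
    (hw₁meas : Measurable w₁) (hw₂meas : Measurable w₂)
    (hfαpos : ∀ᵐ ω, 0 < fα ω) (hfβpos : ∀ᵐ ω, 0 < fβ ω)
    (hw₁pos : ∀ᵐ ω, 0 < w₁ ω) (hw₂pos : ∀ᵐ ω, 0 < w₂ ω)
    (hVeq : ∀ᵐ ω, Vα ω = Vβ ω)
    {c₁ c₂ c₃ : ℝ} (hc₁ : 0 < c₁) (hc₂ : 0 < c₂) (hc₃ : 0 < c₃)
    (h13 : ∀ᵐ ω, fα ω = c₁ * fβ ω)
    (h14 : ∀ᵐ ω, w₁ ω = c₂ * fα ω)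
    (h15 : ∀ᵐ ω, w₂ ω = c₃ * fβ ω)
    (S : Matrix (Fin 2) (Fin 2) ℝ)
    (hS : S = !![α * (1 - α), α * (1 - β); α * (1 - β), β * (1 - β)])
    (C : Matrix (Fin q₁ ⊕ Fin q₁) (Fin q₁ ⊕ Fin q₁) ℝ)
    (hC : C = Matrix.fromBlocks
      ((α * (1 - α) * c₂) • (1 : Matrix (Fin q₁) (Fin q₁) ℝ))
      ((α * (1 - β) * c₁ * c₂) • (1 : Matrix (Fin q₁) (Fin q₁) ℝ))
      ((α * (1 - β) * (c₃ / c₁)) • (1 : Matrix (Fin q₁) (Fin q₁) ℝ))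
      ((β * (1 - β) * c₃) • (1 : Matrix (Fin q₁) (Fin q₁) ℝ))) :
    IsUnit C.det ∧ C.det = (α * c₂ * c₃ * (1 - β) * (β - α)) ^ q₁ ∧
      ∀ᵐ ω, dqA (w₁ ω) (w₂ ω) (Vα ω) (Vβ ω)
        = C * (dqD (fα ω) (fβ ω) (Vα ω) (Vβ ω))ᵀ * S⁻¹ := by
  have hb1 : (0:ℝ) < 1 - β := by linarith
  have hba : (0:ℝ) < β - α := by linarith
  -- abbreviations for the scalar block entries
  set a : ℝ := α * (1 - α) * c₂ with ha_def
  set b : ℝ := α * (1 - β) * c₁ * c₂ with hb_def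
  set c : ℝ := α * (1 - β) * (c₃ / c₁) with hc_def
  set d : ℝ := β * (1 - β) * c₃ with hd_def
  have ha0 : a ≠ 0 := by
    have : (0:ℝ) < a := by
      have h1 : (0:ℝ) < 1 - α := by linarith
      positivity
    exact this.ne'
  have hkey : a * d - c * b = α * c₂ * c₃ * (1 - β) * (β - α) := by
    field_simp [ha_def, hb_def, hc_def, hd_def]
    have hcc := mul_inv_cancel₀ hc₁.ne'
    rw [ha_def, hb_def, hc_def, hd_def, div_eq_mul_inv]
    linear_combination (-(α ^ 2 * (1 - β) ^ 2 * c₂ * c₃)) * hcc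
  have hdetbase : (0:ℝ) < α * c₂ * c₃ * (1 - β) * (β - α) := by positivity
  -- invertibility of the top-left block
  haveI : Invertible ((a) • (1 : Matrix (Fin q₁) (Fin q₁) ℝ)) := by
    refine Matrix.invertibleOfIsUnitDet _ ?_
    simp only [Matrix.det_smul, Matrix.det_one, mul_one]
    exact (isUnit_iff_ne_zero.mpr (pow_ne_zero _ ha0))
  have hinvOf : ⅟((a) • (1 : Matrix (Fin q₁) (Fin q₁) ℝ))
      = a⁻¹ • (1 : Matrix (Fin q₁) (Fin q₁) ℝ) := by
    refine invOf_eq_right_inv ?_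
    rw [Matrix.smul_mul, Matrix.mul_smul, Matrix.one_mul, smul_smul,
      mul_inv_cancel₀ ha0, one_smul]
  have hdet : C.det = (α * c₂ * c₃ * (1 - β) * (β - α)) ^ q₁ := by
    rw [hC, Matrix.det_fromBlocks₁₁, hinvOf]
    simp only [Matrix.smul_mul, Matrix.mul_smul, Matrix.one_mul, Matrix.mul_one,
      smul_smul, ← sub_smul, Matrix.det_smul, Matrix.det_one, mul_one,
      Fintype.card_fin]
    rw [← mul_pow, ← hkey]
    congr 1
    field_simp
  refine ⟨hdet ▸ isUnit_iff_ne_zero.mpr (pow_ne_zero _ hdetbase.ne'), hdet, ?_⟩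
  -- S is invertible
  have hSdet : S.det = α * (1 - β) * (β - α) := by
    rw [hS, Matrix.det_fin_two_of]; ring
  haveI : Invertible S := by
    refine Matrix.invertibleOfIsUnitDet _ ?_
    rw [hSdet]
    exact isUnit_iff_ne_zero.mpr (by positivity)
  filter_upwards [hVeq, h13, h14, h15] with ω hV hf hw1 hw2
  have hmain : dqA (w₁ ω) (w₂ ω) (Vα ω) (Vβ ω) * S
      = C * (dqD (fα ω) (fβ ω) (Vα ω) (Vβ ω))ᵀ := by
    ext i j
    rcases i with i | i <;> fin_cases j <;>
      simp [dqA, dqD, hS, hC, Matrix.mul_apply, Fintype.sum_sum_type,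
        Matrix.fromBlocks, Matrix.one_apply, Fin.sum_univ_two, hV, hf, hw1, hw2,
        Finset.sum_ite_eq', mul_comm, mul_assoc, mul_left_comm,
        ha_def, hb_def, hc_def, hd_def] <;>
      field_simp <;> (try ring) <;> tauto
  rw [← hmain, Matrix.mul_inv_cancel_right_of_invertible]
end

section
/- Necessity core of Theorem 2(B) (efficiency gap for double quantile models): In the double-quantile block setup, assume V_α ≠ 0 and V_β ≠ 0 ℙ-a.s., that V_α satisfies the richness condition in ℝ^{q₁} and V_β satisfies the richness condition in ℝ^{q₂}. If there exists an invertible deterministic matrix C ∈ ℝ^{q×q} such that A_g = C Dᵀ S⁻¹ ℙ-a.s., then there exist constants c₂ > 0 and c₃ > 0 such that w₁ = c₂ f_α ℙ-a.s. and w₂ = c₃ f_β ℙ-a.s. Consequently, if no such constants exist, then for every invertible deterministic C the M-estimator instrument matrix A_g differs from the efficient instrument matrix C Dᵀ S⁻¹ with positive probability. -/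
open MeasureTheory Matrix

open Finset in
lemma eigen_const {n : ℕ} (hn : 1 ≤ n) (v : Fin (n+1) → Fin n → ℝ)
    (hind : ∀ i : Fin (n+1), LinearIndependent ℝ fun j : {j : Fin (n+1) // j ≠ i} => v j.1)
    (M : Matrix (Fin n) (Fin n) ℝ) (lam : Fin (n+1) → ℝ)
    (heig : ∀ i, M.mulVec (v i) = lam i • v i) :
    ∀ x : Fin n → ℝ, M.mulVec x = lam 0 • x := by
  -- v is not linearly independent
  have hnli : ¬ LinearIndependent ℝ v := by
    intro h
    have := h.fintype_card_le_finrank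
    rw [Module.finrank_fin_fun] at this
    simp at this
  obtain ⟨g, hg0, i₀, hgi₀⟩ := Fintype.not_linearIndependent_iff.mp hnli
  -- helper: reduce a full sum with vanishing k-coefficient to the subtype
  have hsub : ∀ (k : Fin (n+1)) (c : Fin (n+1) → ℝ), c k = 0 →
      (∑ i, c i • v i) = 0 → ∀ j, j ≠ k → c j = 0 := by
    intro k c hck hcs
    have he : (∑ j ∈ univ.erase k, c j • v j) = ∑ j : {j : Fin (n+1) // j ≠ k}, c j.1 • v j.1 :=
      Finset.sum_subtype (univ.erase k) (fun j => by simp) (fun j => c j • v j)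
    have hsum : (∑ j : {j : Fin (n+1) // j ≠ k}, c j.1 • v j.1) = 0 := by
      rw [← he]
      rw [← Finset.add_sum_erase _ _ (Finset.mem_univ k)] at hcs
      rw [hck, zero_smul, zero_add] at hcs
      exact hcs
    have := Fintype.linearIndependent_iff.mp (hind k) (fun j => c j.1) hsum
    intro j hj
    exact this ⟨j, hj⟩
  -- all coefficients nonzero
  have hgall : ∀ k, g k ≠ 0 := by
    intro k hk
    have hall := hsub k g hk hg0
    apply hgi₀
    by_cases h : i₀ = k
    · rw [h]; exact hk
    · exact hall i₀ h
  -- eigenvalues are all equal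
  have h1 : (∑ i, (g i * lam i) • v i) = 0 := by
    have h0 : M.mulVecLin (∑ i, g i • v i) = 0 := by rw [hg0, map_zero]
    rw [map_sum] at h0
    simpa [Matrix.mulVecLin_apply, heig, smul_smul] using h0
  have h2 : (∑ i, (g i * lam 0) • v i) = 0 := by
    have : lam 0 • (∑ i, g i • v i) = 0 := by rw [hg0, smul_zero]
    rw [Finset.smul_sum] at this
    simpa [smul_smul, mul_comm] using this
  have h3 : (∑ i, (g i * (lam i - lam 0)) • v i) = 0 := by
    have := sub_eq_zero.mpr (h1.trans h2.symm)
    rw [← Finset.sum_sub_distrib] at this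
    simpa [← sub_smul, mul_sub] using this
  have hlam : ∀ i, lam i = lam 0 := by
    intro i
    by_cases hi : i = 0
    · rw [hi]
    · have := hsub 0 (fun i => g i * (lam i - lam 0)) (by simp) h3 i hi
      rcases mul_eq_zero.mp this with h | h
      · exact absurd h (hgall i)
      · linarith [sub_eq_zero.mp h]
  -- basis argument
  have hcard : Fintype.card {j : Fin (n+1) // j ≠ (0 : Fin (n+1))}
      = Module.finrank ℝ (Fin n → ℝ) := by
    rw [Module.finrank_fin_fun]
    have : Fintype.card {j : Fin (n+1) // ¬ (j = 0)} = n + 1 - 1 := by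
      rw [Fintype.card_subtype_compl, Fintype.card_fin, Fintype.card_subtype_eq]
    simpa using this
  haveI : Nonempty {j : Fin (n+1) // j ≠ (0 : Fin (n+1))} :=
    ⟨⟨⟨1, by omega⟩, by simp [Fin.ext_iff]⟩⟩
  let b := basisOfLinearIndependentOfCardEqFinrank (hind 0) hcard
  have hb : ∀ j, b j = v j.1 := fun j => by
    simp [b, coe_basisOfLinearIndependentOfCardEqFinrank]
  have hML : M.mulVecLin = (lam 0) • LinearMap.id := by
    apply b.ext
    intro j
    rw [hb j]
    simp [Matrix.mulVecLin_apply, heig, hlam j.1]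
  intro x
  have := congrFun (congrArg DFunLike.coe hML) x
  simpa [Matrix.mulVecLin_apply] using this


lemma rich_eigen_const {Ω : Type*} [MeasureSpace Ω]
    {n : ℕ} (hn : 1 ≤ n) (V : Ω → Fin n → ℝ) (hrich : Rich V)
    (M : Matrix (Fin n) (Fin n) ℝ) (lam : Ω → ℝ)
    (B : Set Ω) (hBm : MeasurableSet B) (hB1 : volume B = 1)
    (hprop : ∀ ω ∈ B, M.mulVec (V ω) = lam ω • V ω ∧ V ω ≠ 0 ∧ 0 < lam ω) :
    ∃ c > (0:ℝ), ∀ ω ∈ B, lam ω = c := by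
  obtain ⟨v, hinj, hmem, hind⟩ := hrich B hBm hB1
  choose ω₀ hωB hωv using hmem
  have heig : ∀ i, M.mulVec (v i) = lam (ω₀ i) • v i := fun i => by
    rw [← hωv i]; exact (hprop _ (hωB i)).1
  have hall := eigen_const hn v hind M (fun i => lam (ω₀ i)) heig
  refine ⟨lam (ω₀ 0), (hprop _ (hωB 0)).2.2, ?_⟩
  intro ω hω
  have h1 := (hprop ω hω).1
  have h2 := hall (V ω)
  have hne := (hprop ω hω).2.1
  have : (lam ω - lam (ω₀ 0)) • V ω = 0 := by
    rw [sub_smul, ← h1, ← h2, sub_self]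
  rcases smul_eq_zero.mp this with h | h
  · linarith [sub_eq_zero.mp h]
  · exact absurd h hne


/-- Necessity core of Theorem 2(B): if the M-estimator instrument matrix
`A_g` coincides a.s. with an efficient instrument `C Dᵀ S⁻¹` for some deterministic
invertible `C`, then `w₁ = c₂ f_α` and `w₂ = c₃ f_β` a.s. for some constants
`c₂, c₃ > 0`; consequently, if no such constants exist, then for every invertible
deterministic `C` the matrix `A_g` differs from `C Dᵀ S⁻¹` with positive probability. -/
theorem dq_efficiency_gap_necessity
    {Ω : Type*} [MeasureSpace Ω] [IsProbabilityMeasure (volume : Measure Ω)]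
    {q₁ q₂ : ℕ} (hq₁ : 1 ≤ q₁) (hq₂ : 1 ≤ q₂)
    {α β : ℝ} (hα : 0 < α) (hαβ : α < β) (hβ : β < 1)
    (Vα : Ω → Fin q₁ → ℝ) (Vβ : Ω → Fin q₂ → ℝ) (fα fβ w₁ w₂ : Ω → ℝ)
    (hVαmeas : Measurable Vα) (hVβmeas : Measurable Vβ)
    (hfαmeas : Measurable fα) (hfβmeas : Measurable fβ)
    (hw₁meas : Measurable w₁) (hw₂meas : Measurable w₂)
    (hfαpos : ∀ᵐ ω, 0 < fα ω) (hfβpos : ∀ᵐ ω, 0 < fβ ω)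
    (hw₁pos : ∀ᵐ ω, 0 < w₁ ω) (hw₂pos : ∀ᵐ ω, 0 < w₂ ω)
    (hVαne : ∀ᵐ ω, Vα ω ≠ 0) (hVβne : ∀ᵐ ω, Vβ ω ≠ 0)
    (hrichα : Rich Vα) (hrichβ : Rich Vβ)
    (S : Matrix (Fin 2) (Fin 2) ℝ)
    (hS : S = !![α * (1 - α), α * (1 - β); α * (1 - β), β * (1 - β)]) :
    (∀ C : Matrix (Fin q₁ ⊕ Fin q₂) (Fin q₁ ⊕ Fin q₂) ℝ, IsUnit C.det →
      (∀ᵐ ω, dqA (w₁ ω) (w₂ ω) (Vα ω) (Vβ ω)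
          = C * (dqD (fα ω) (fβ ω) (Vα ω) (Vβ ω))ᵀ * S⁻¹) →
      ∃ c₂ > (0 : ℝ), ∃ c₃ > (0 : ℝ),
        (∀ᵐ ω, w₁ ω = c₂ * fα ω) ∧ (∀ᵐ ω, w₂ ω = c₃ * fβ ω)) ∧
    ((¬ ∃ c₂ > (0 : ℝ), ∃ c₃ > (0 : ℝ),
        (∀ᵐ ω, w₁ ω = c₂ * fα ω) ∧ (∀ᵐ ω, w₂ ω = c₃ * fβ ω)) →
      ∀ C : Matrix (Fin q₁ ⊕ Fin q₂) (Fin q₁ ⊕ Fin q₂) ℝ, IsUnit C.det →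
        0 < volume {ω | dqA (w₁ ω) (w₂ ω) (Vα ω) (Vβ ω)
          ≠ C * (dqD (fα ω) (fβ ω) (Vα ω) (Vβ ω))ᵀ * S⁻¹}) := by
  have hαα : (0:ℝ) < α * (1 - α) := mul_pos hα (by linarith)
  have hββ : (0:ℝ) < β * (1 - β) := mul_pos (by linarith) (by linarith)
  have hdet : S.det = α * (1 - β) * (β - α) := by rw [hS, Matrix.det_fin_two_of]; ring
  have hdetpos : 0 < S.det := by
    rw [hdet]; exact mul_pos (mul_pos hα (by linarith)) (by linarith)
  have hSunit : IsUnit S.det := (ne_of_gt hdetpos).isUnit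
  have hS00 : S 0 0 = α * (1 - α) := by rw [hS]; simp
  have hS10 : S 1 0 = α * (1 - β) := by rw [hS]; simp
  have hS01 : S 0 1 = α * (1 - β) := by rw [hS]; simp
  have hS11 : S 1 1 = β * (1 - β) := by rw [hS]; simp
  have part1 : ∀ C : Matrix (Fin q₁ ⊕ Fin q₂) (Fin q₁ ⊕ Fin q₂) ℝ, IsUnit C.det →
      (∀ᵐ ω, dqA (w₁ ω) (w₂ ω) (Vα ω) (Vβ ω)
          = C * (dqD (fα ω) (fβ ω) (Vα ω) (Vβ ω))ᵀ * S⁻¹) →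
      ∃ c₂ > (0 : ℝ), ∃ c₃ > (0 : ℝ),
        (∀ᵐ ω, w₁ ω = c₂ * fα ω) ∧ (∀ᵐ ω, w₂ ω = c₃ * fβ ω) := by
    intro C hC hAeq
    have hP : ∀ᵐ ω, (dqA (w₁ ω) (w₂ ω) (Vα ω) (Vβ ω)
        = C * (dqD (fα ω) (fβ ω) (Vα ω) (Vβ ω))ᵀ * S⁻¹) ∧ 0 < fα ω ∧ 0 < fβ ω ∧
        0 < w₁ ω ∧ 0 < w₂ ω ∧ Vα ω ≠ 0 ∧ Vβ ω ≠ 0 := by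
      filter_upwards [hAeq, hfαpos, hfβpos, hw₁pos, hw₂pos, hVαne, hVβne] with
        ω h1 h2 h3 h4 h5 h6 h7
      exact ⟨h1, h2, h3, h4, h5, h6, h7⟩
    obtain ⟨t, hsubt, htm, ht0⟩ := exists_measurable_superset_of_null (ae_iff.mp hP)
    have hBm : MeasurableSet tᶜ := htm.compl
    have hB1 : volume tᶜ = 1 := by
      rw [measure_compl htm (measure_ne_top _ _), ht0, measure_univ, tsub_zero]
    have hBP : ∀ ω ∈ tᶜ, (dqA (w₁ ω) (w₂ ω) (Vα ω) (Vβ ω)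
        = C * (dqD (fα ω) (fβ ω) (Vα ω) (Vβ ω))ᵀ * S⁻¹) ∧ 0 < fα ω ∧ 0 < fβ ω ∧
        0 < w₁ ω ∧ 0 < w₂ ω ∧ Vα ω ≠ 0 ∧ Vβ ω ≠ 0 :=
      fun ω hω => by_contra fun h => hω (hsubt h)
    have hAS : ∀ ω ∈ tᶜ, dqA (w₁ ω) (w₂ ω) (Vα ω) (Vβ ω) * S
        = C * (dqD (fα ω) (fβ ω) (Vα ω) (Vβ ω))ᵀ := by
      intro ω hω
      rw [(hBP ω hω).1, Matrix.mul_assoc, Matrix.nonsing_inv_mul S hSunit, Matrix.mul_one]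
    have keyα : ∀ ω ∈ tᶜ, (Matrix.of fun i j => C (Sum.inl i) (Sum.inl j)).mulVec (Vα ω)
        = ((α * (1 - α)) * w₁ ω / fα ω) • Vα ω := by
      intro ω hω
      obtain ⟨-, hfa, -, -, -, -, -⟩ := hBP ω hω
      funext i
      have hent := congrFun (congrFun (hAS ω hω) (Sum.inl i)) 0
      simp [dqA, dqD, Matrix.mul_apply, Fin.sum_univ_two, Fintype.sum_sum_type,
        Matrix.transpose_apply, hS00, hS10] at hent
      simp only [Matrix.mulVec, dotProduct, Matrix.of_apply, Pi.smul_apply,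
        smul_eq_mul]
      have hs : (∑ x, C (Sum.inl i) (Sum.inl x) * (fα ω * Vα ω x))
          = fα ω * ∑ x, C (Sum.inl i) (Sum.inl x) * Vα ω x := by
        rw [Finset.mul_sum]; exact Finset.sum_congr rfl fun x _ => by ring
      rw [hs] at hent
      rw [div_mul_eq_mul_div, eq_div_iff (ne_of_gt hfa)]
      linear_combination -hent
    have keyβ : ∀ ω ∈ tᶜ, (Matrix.of fun i j => C (Sum.inr i) (Sum.inr j)).mulVec (Vβ ω)
        = ((β * (1 - β)) * w₂ ω / fβ ω) • Vβ ω := by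
      intro ω hω
      obtain ⟨-, -, hfb, -, -, -, -⟩ := hBP ω hω
      funext i
      have hent := congrFun (congrFun (hAS ω hω) (Sum.inr i)) 1
      simp [dqA, dqD, Matrix.mul_apply, Fin.sum_univ_two, Fintype.sum_sum_type,
        Matrix.transpose_apply, hS01, hS11] at hent
      simp only [Matrix.mulVec, dotProduct, Matrix.of_apply, Pi.smul_apply,
        smul_eq_mul]
      have hs : (∑ x, C (Sum.inr i) (Sum.inr x) * (fβ ω * Vβ ω x))
          = fβ ω * ∑ x, C (Sum.inr i) (Sum.inr x) * Vβ ω x := by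
        rw [Finset.mul_sum]; exact Finset.sum_congr rfl fun x _ => by ring
      rw [hs] at hent
      rw [div_mul_eq_mul_div, eq_div_iff (ne_of_gt hfb)]
      linear_combination -hent
    obtain ⟨c₁, hc₁pos, hc₁⟩ := rich_eigen_const hq₁ Vα hrichα
      (Matrix.of fun i j => C (Sum.inl i) (Sum.inl j))
      (fun ω => (α * (1 - α)) * w₁ ω / fα ω) tᶜ hBm hB1
      (fun ω hω => ⟨keyα ω hω, (hBP ω hω).2.2.2.2.2.1,
        div_pos (mul_pos hαα (hBP ω hω).2.2.2.1) (hBP ω hω).2.1⟩)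
    obtain ⟨d₁, hd₁pos, hd₁⟩ := rich_eigen_const hq₂ Vβ hrichβ
      (Matrix.of fun i j => C (Sum.inr i) (Sum.inr j))
      (fun ω => (β * (1 - β)) * w₂ ω / fβ ω) tᶜ hBm hB1
      (fun ω hω => ⟨keyβ ω hω, (hBP ω hω).2.2.2.2.2.2,
        div_pos (mul_pos hββ (hBP ω hω).2.2.2.2.1) (hBP ω hω).2.2.1⟩)
    refine ⟨c₁ / (α * (1 - α)), div_pos hc₁pos hαα,
      d₁ / (β * (1 - β)), div_pos hd₁pos hββ, ?_, ?_⟩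
    · rw [ae_iff]
      refine measure_mono_null (fun ω hω => ?_) ht0
      by_contra hωt
      apply hω
      have hc := hc₁ ω hωt
      have hfa := (hBP ω hωt).2.1
      show w₁ ω = c₁ / (α * (1 - α)) * fα ω
      have hk := hαα.ne'
      have hf' := hfa.ne'
      rw [← hc, eq_comm, div_div, div_mul_eq_mul_div, div_eq_iff (mul_ne_zero hf' hk)]
      ring
    · rw [ae_iff]
      refine measure_mono_null (fun ω hω => ?_) ht0
      by_contra hωt
      apply hω
      have hc := hd₁ ω hωt
      have hfb := (hBP ω hωt).2.2.1
      show w₂ ω = d₁ / (β * (1 - β)) * fβ ω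
      have hk := hββ.ne'
      have hf' := hfb.ne'
      rw [← hc, eq_comm, div_div, div_mul_eq_mul_div, div_eq_iff (mul_ne_zero hf' hk)]
      ring
  refine ⟨part1, ?_⟩
  intro hne C hC
  by_contra hnot
  have h0 : volume {ω | dqA (w₁ ω) (w₂ ω) (Vα ω) (Vβ ω)
      ≠ C * (dqD (fα ω) (fβ ω) (Vα ω) (Vβ ω))ᵀ * S⁻¹} = 0 := by
    exact le_antisymm (not_lt.mp hnot) zero_le
  exact hne (part1 C hC (ae_iff.mpr h0))
end

section
/- Only-if direction of Theorem 2(A): In the double-quantile block setup, assume in addition q₁ = q₂, V_α = V_β =: V ℙ-a.s. (equal model gradients), V ≠ 0 ℙ-a.s., and that V satisfies the richness condition in ℝ^{q₁}. If there exists an invertible deterministic matrix C ∈ ℝ^{2q₁×2q₁} such that A_g = C Dᵀ S⁻¹ ℙ-a.s., then there exist constants c₁, c₂, c₃ > 0 such that, ℙ-a.s., f_α = c₁ f_β, w₁ = c₂ f_α, and w₂ = c₃ f_β (conditions (13)–(15) of the paper). -/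
open MeasureTheory Matrix

lemma ae_extract {Ω : Type*} [MeasureSpace Ω] [IsProbabilityMeasure (volume : Measure Ω)]
    {p : Ω → Prop} (h : ∀ᵐ ω, p ω) :
    ∃ B : Set Ω, MeasurableSet B ∧ volume B = 1 ∧ ∀ ω ∈ B, p ω := by
  rw [ae_iff] at h
  refine ⟨(toMeasurable volume {ω | ¬ p ω})ᶜ, (measurableSet_toMeasurable _ _).compl, ?_, ?_⟩
  · rw [measure_compl (measurableSet_toMeasurable _ _) (measure_ne_top _ _),
      measure_toMeasurable, h, measure_univ, tsub_zero]
  · intro ω hω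
    by_contra hp
    exact hω (subset_toMeasurable _ _ hp)

lemma eigen_const_s15 {Ω : Type*} [MeasureSpace Ω]
    {q : ℕ} (hq : 1 ≤ q) (M : Matrix (Fin q) (Fin q) ℝ)
    (V : Ω → Fin q → ℝ) (lam : Ω → ℝ) (hrich : Rich V)
    (B : Set Ω) (hBm : MeasurableSet B) (hB1 : volume B = 1)
    (hne : ∀ ω ∈ B, V ω ≠ 0)
    (heig : ∀ ω ∈ B, M.mulVec (V ω) = lam ω • V ω) :
    ∃ μ : ℝ, ∀ ω ∈ B, lam ω = μ := by
  obtain ⟨v, hinj, hmem, hindep⟩ := hrich B hBm hB1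
  have hev : ∀ i, ∃ l : ℝ, M.mulVec (v i) = l • v i := by
    intro i; obtain ⟨ω, hω, hVω⟩ := hmem i
    exact ⟨lam ω, by rw [← hVω]; exact heig ω hω⟩
  choose l hl using hev
  -- the q+1 vectors are linearly dependent
  have hdep : ¬ LinearIndependent ℝ v := by
    intro h
    have := h.fintype_card_le_finrank
    simp [Module.finrank_pi] at this
  obtain ⟨g, hgsum, i', hgi'⟩ := Fintype.not_linearIndependent_iff.mp hdep
  -- all coefficients are nonzero
  have hg0 : ∀ i, g i ≠ 0 := by
    intro i hgi
    have hi'ne : i' ≠ i := by rintro rfl; exact hgi' hgi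
    have hsum : ∑ j : {j : Fin (q+1) // j ≠ i}, g j.1 • v j.1 = 0 := by
      rw [← Finset.sum_subtype (Finset.univ.erase i) (by simp) (fun j => g j • v j),
        Finset.sum_erase_eq_sub (Finset.mem_univ i), hgsum, hgi, zero_smul, sub_zero]
    exact hgi' (Fintype.linearIndependent_iff.mp (hindep i) (fun j => g j.1) hsum ⟨i', hi'ne⟩)
  set i₀ : Fin (q+1) := 0 with hi₀
  -- all eigenvalues are equal
  have hLsum : ∑ i, (g i * l i) • v i = 0 := by
    have h1 : M.mulVecLin (∑ i, g i • v i) = ∑ i, (g i * l i) • v i := by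
      rw [map_sum]
      refine Finset.sum_congr rfl fun i _ => ?_
      rw [LinearMap.map_smul, Matrix.mulVecLin_apply, hl i, smul_smul]
    rw [hgsum, map_zero] at h1; exact h1.symm
  have hall : ∀ j, l j = l i₀ := by
    intro j
    rcases eq_or_ne j i₀ with rfl | hj
    · rfl
    have h2 : ∑ i, (g i * (l i - l i₀)) • v i = 0 := by
      have : ∑ i, (g i * (l i - l i₀)) • v i
          = ∑ i, (g i * l i) • v i - l i₀ • ∑ i, g i • v i := by
        rw [Finset.smul_sum, ← Finset.sum_sub_distrib]
        refine Finset.sum_congr rfl fun i _ => ?_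
        rw [smul_smul]
        module
      rw [this, hLsum, hgsum, smul_zero, sub_zero]
    have hsum' : ∑ k : {k : Fin (q+1) // k ≠ i₀}, (g k.1 * (l k.1 - l i₀)) • v k.1 = 0 := by
      rw [← Finset.sum_subtype (Finset.univ.erase i₀) (by simp)
          (fun k => (g k * (l k - l i₀)) • v k),
        Finset.sum_erase_eq_sub (Finset.mem_univ i₀), h2, sub_self, mul_zero, zero_smul, sub_zero]
    have := Fintype.linearIndependent_iff.mp (hindep i₀)
      (fun k => g k.1 * (l k.1 - l i₀)) hsum' ⟨j, hj⟩
    rcases mul_eq_zero.mp this with h | h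
    · exact absurd h (hg0 j)
    · linarith [sub_eq_zero.mp h]
  -- build a basis and conclude M = l i₀ • id
  haveI : Nonempty {k : Fin (q+1) // k ≠ i₀} :=
    ⟨⟨Fin.last q, by simp [hi₀, Fin.ext_iff]; omega⟩⟩
  have hcard : Fintype.card {k : Fin (q+1) // k ≠ i₀} = Module.finrank ℝ (Fin q → ℝ) := by
    simp [Fintype.card_subtype_compl, Module.finrank_pi]
  let b := basisOfLinearIndependentOfCardEqFinrank (hindep i₀) hcard
  have hb : ∀ k, b k = v k.1 := fun k =>
    congrFun (coe_basisOfLinearIndependentOfCardEqFinrank (hindep i₀) hcard) k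
  have hM : M.mulVecLin = (l i₀) • LinearMap.id := by
    refine b.ext fun k => ?_
    rw [hb k, Matrix.mulVecLin_apply, hl k.1, hall k.1]
    simp
  refine ⟨l i₀, fun ω hω => ?_⟩
  have h1 : lam ω • V ω = l i₀ • V ω := by
    rw [← heig ω hω, ← Matrix.mulVecLin_apply, hM]; simp
  have h2 : (lam ω - l i₀) • V ω = 0 := by rw [sub_smul, h1, sub_self]
  rcases smul_eq_zero.mp h2 with h | h
  · linarith [sub_eq_zero.mp h]
  · exact absurd h (hne ω hω)

/-- Only-if direction of Theorem 2(A): under equal model gradients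
(`q₁ = q₂`, `V_α = V_β =: V` a.s., `V ≠ 0` a.s.) and the richness condition, if the
M-estimator instrument matrix `A_g` coincides a.s. with an efficient instrument
`C Dᵀ S⁻¹` for some deterministic invertible `C`, then there are constants
`c₁, c₂, c₃ > 0` with `f_α = c₁ f_β`, `w₁ = c₂ f_α` and `w₂ = c₃ f_β` a.s.
(conditions (13)–(15) of the paper). -/
theorem dq_only_if_direction
    {Ω : Type*} [MeasureSpace Ω] [IsProbabilityMeasure (volume : Measure Ω)]
    {q₁ : ℕ} (hq₁ : 1 ≤ q₁)
    {α β : ℝ} (hα : 0 < α) (hαβ : α < β) (hβ : β < 1)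
    (Vα Vβ : Ω → Fin q₁ → ℝ) (fα fβ w₁ w₂ : Ω → ℝ)
    (hVαmeas : Measurable Vα) (hVβmeas : Measurable Vβ)
    (hfαmeas : Measurable fα) (hfβmeas : Measurable fβ)
    (hw₁meas : Measurable w₁) (hw₂meas : Measurable w₂)
    (hfαpos : ∀ᵐ ω, 0 < fα ω) (hfβpos : ∀ᵐ ω, 0 < fβ ω)
    (hw₁pos : ∀ᵐ ω, 0 < w₁ ω) (hw₂pos : ∀ᵐ ω, 0 < w₂ ω)
    (hVeq : ∀ᵐ ω, Vα ω = Vβ ω)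
    (hVne : ∀ᵐ ω, Vα ω ≠ 0)
    (hrich : Rich Vα)
    (S : Matrix (Fin 2) (Fin 2) ℝ)
    (hS : S = !![α * (1 - α), α * (1 - β); α * (1 - β), β * (1 - β)])
    (hCex : ∃ C : Matrix (Fin q₁ ⊕ Fin q₁) (Fin q₁ ⊕ Fin q₁) ℝ, IsUnit C.det ∧
      ∀ᵐ ω, dqA (w₁ ω) (w₂ ω) (Vα ω) (Vβ ω)
        = C * (dqD (fα ω) (fβ ω) (Vα ω) (Vβ ω))ᵀ * S⁻¹) :
    ∃ c₁ > (0 : ℝ), ∃ c₂ > (0 : ℝ), ∃ c₃ > (0 : ℝ),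
      (∀ᵐ ω, fα ω = c₁ * fβ ω) ∧
      (∀ᵐ ω, w₁ ω = c₂ * fα ω) ∧
      (∀ᵐ ω, w₂ ω = c₃ * fβ ω) := by
  obtain ⟨C, hCunit, hCae⟩ := hCex
  have h1α : (0:ℝ) < 1 - α := by linarith
  have h1β : (0:ℝ) < 1 - β := by linarith
  have hβ0 : (0:ℝ) < β := by linarith
  have hSdet : IsUnit S.det := by
    rw [hS, Matrix.det_fin_two_of]
    have : (0:ℝ) < α * (1 - β) * (β - α) :=
      mul_pos (mul_pos hα h1β) (sub_pos.mpr hαβ)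
    exact isUnit_iff_ne_zero.2 (by nlinarith)
  have hAll : ∀ᵐ ω, (Vα ω = Vβ ω ∧ Vα ω ≠ 0 ∧ 0 < fα ω ∧ 0 < fβ ω ∧ 0 < w₁ ω ∧ 0 < w₂ ω ∧
      dqA (w₁ ω) (w₂ ω) (Vα ω) (Vβ ω) = C * (dqD (fα ω) (fβ ω) (Vα ω) (Vβ ω))ᵀ * S⁻¹) := by
    filter_upwards [hVeq, hVne, hfαpos, hfβpos, hw₁pos, hw₂pos, hCae] with ω h1 h2 h3 h4 h5 h6 h7
    exact ⟨h1, h2, h3, h4, h5, h6, h7⟩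
  obtain ⟨B, hBm, hB1, hB⟩ := ae_extract hAll
  have key : ∀ ω ∈ B, ∀ i : Fin q₁,
      (w₁ ω * Vα ω i * (α*(1-α)) = fα ω * ∑ a, C (Sum.inl i) (Sum.inl a) * Vα ω a) ∧
      (w₁ ω * Vα ω i * (α*(1-β)) = fβ ω * ∑ a, C (Sum.inl i) (Sum.inr a) * Vα ω a) ∧
      (w₂ ω * Vα ω i * (β*(1-β)) = fβ ω * ∑ a, C (Sum.inr i) (Sum.inr a) * Vα ω a) := by
    intro ω hω i
    obtain ⟨hVab, -, -, -, -, -, hEq⟩ := hB ω hω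
    rw [← hVab] at hEq
    have hAS : dqA (w₁ ω) (w₂ ω) (Vα ω) (Vα ω) * S
        = C * (dqD (fα ω) (fβ ω) (Vα ω) (Vα ω))ᵀ := by
      rw [hEq, Matrix.nonsing_inv_mul_cancel_right _ _ hSdet]
    rw [hS] at hAS
    have h1 := congrFun (congrFun hAS (Sum.inl i)) 0
    have h2 := congrFun (congrFun hAS (Sum.inl i)) 1
    have h3 := congrFun (congrFun hAS (Sum.inr i)) 1
    simp [Matrix.mul_apply, dqA, dqD, Fin.sum_univ_two, Fintype.sum_sum_type] at h1 h2 h3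
    refine ⟨?_, ?_, ?_⟩
    · rw [Finset.mul_sum,
        show (∑ a, fα ω * (C (Sum.inl i) (Sum.inl a) * Vα ω a))
          = ∑ a, C (Sum.inl i) (Sum.inl a) * (fα ω * Vα ω a) from
          Finset.sum_congr rfl fun a _ => by ring]
      linarith [h1]
    · rw [Finset.mul_sum,
        show (∑ a, fβ ω * (C (Sum.inl i) (Sum.inr a) * Vα ω a))
          = ∑ a, C (Sum.inl i) (Sum.inr a) * (fβ ω * Vα ω a) from
          Finset.sum_congr rfl fun a _ => by ring]
      linarith [h2]
    · rw [Finset.mul_sum,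
        show (∑ a, fβ ω * (C (Sum.inr i) (Sum.inr a) * Vα ω a))
          = ∑ a, C (Sum.inr i) (Sum.inr a) * (fβ ω * Vα ω a) from
          Finset.sum_congr rfl fun a _ => by ring]
      linarith [h3]
  set C11 : Matrix (Fin q₁) (Fin q₁) ℝ := Matrix.of fun i j => C (Sum.inl i) (Sum.inl j) with hC11
  set C12 : Matrix (Fin q₁) (Fin q₁) ℝ := Matrix.of fun i j => C (Sum.inl i) (Sum.inr j) with hC12
  set C22 : Matrix (Fin q₁) (Fin q₁) ℝ := Matrix.of fun i j => C (Sum.inr i) (Sum.inr j) with hC22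
  have heig11 : ∀ ω ∈ B, C11.mulVec (Vα ω) = (α*(1-α) * w₁ ω / fα ω) • Vα ω := by
    intro ω hω; funext i
    obtain ⟨-, -, hfα, -, -, -, -⟩ := hB ω hω
    have h := (key ω hω i).1
    simp only [Matrix.mulVec, dotProduct, Pi.smul_apply, smul_eq_mul, hC11, Matrix.of_apply]
    rw [div_mul_eq_mul_div, eq_div_iff (ne_of_gt hfα)]
    linarith [h]
  have heig12 : ∀ ω ∈ B, C12.mulVec (Vα ω) = (α*(1-β) * w₁ ω / fβ ω) • Vα ω := by
    intro ω hω; funext i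
    obtain ⟨-, -, -, hfβ, -, -, -⟩ := hB ω hω
    have h := (key ω hω i).2.1
    simp only [Matrix.mulVec, dotProduct, Pi.smul_apply, smul_eq_mul, hC12, Matrix.of_apply]
    rw [div_mul_eq_mul_div, eq_div_iff (ne_of_gt hfβ)]
    linarith [h]
  have heig22 : ∀ ω ∈ B, C22.mulVec (Vα ω) = (β*(1-β) * w₂ ω / fβ ω) • Vα ω := by
    intro ω hω; funext i
    obtain ⟨-, -, -, hfβ, -, -, -⟩ := hB ω hω
    have h := (key ω hω i).2.2
    simp only [Matrix.mulVec, dotProduct, Pi.smul_apply, smul_eq_mul, hC22, Matrix.of_apply]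
    rw [div_mul_eq_mul_div, eq_div_iff (ne_of_gt hfβ)]
    linarith [h]
  have hne : ∀ ω ∈ B, Vα ω ≠ 0 := fun ω hω => (hB ω hω).2.1
  obtain ⟨μ11, hμ11⟩ := eigen_const_s15 hq₁ C11 Vα _ hrich B hBm hB1 hne heig11
  obtain ⟨μ12, hμ12⟩ := eigen_const_s15 hq₁ C12 Vα _ hrich B hBm hB1 hne heig12
  obtain ⟨μ22, hμ22⟩ := eigen_const_s15 hq₁ C22 Vα _ hrich B hBm hB1 hne heig22
  -- B is nonempty, so the constants are positive
  have hBne : B.Nonempty := by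
    rw [Set.nonempty_iff_ne_empty]
    rintro rfl
    simp at hB1
  obtain ⟨ω₀, hω₀⟩ := hBne
  obtain ⟨-, -, hfα0, hfβ0, hw10, hw20, -⟩ := hB ω₀ hω₀
  have hμ11pos : 0 < μ11 := by
    rw [← hμ11 ω₀ hω₀]
    exact div_pos (mul_pos (mul_pos hα h1α) hw10) hfα0
  have hμ12pos : 0 < μ12 := by
    rw [← hμ12 ω₀ hω₀]
    exact div_pos (mul_pos (mul_pos hα h1β) hw10) hfβ0
  have hμ22pos : 0 < μ22 := by
    rw [← hμ22 ω₀ hω₀]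
    exact div_pos (mul_pos (mul_pos hβ0 h1β) hw20) hfβ0
  have hc₂pos : 0 < μ11 / (α*(1-α)) := div_pos hμ11pos (mul_pos hα h1α)
  refine ⟨μ12 / (α*(1-β)) / (μ11 / (α*(1-α))), by positivity,
    μ11 / (α*(1-α)), hc₂pos, μ22 / (β*(1-β)), by positivity, ?_, ?_, ?_⟩
  · -- fα = c₁ fβ
    have hBae : ∀ᵐ ω, ω ∈ B := by
      rw [ae_iff]
      have : volume Bᶜ = 0 := by
        rw [measure_compl hBm (measure_ne_top _ _), hB1, measure_univ, tsub_self]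
      exact this
    filter_upwards [hBae] with ω hω
    obtain ⟨-, -, hfα, hfβ, hw1, -, -⟩ := hB ω hω
    have e1 := hμ11 ω hω
    have e2 := hμ12 ω hω
    rw [div_eq_iff (ne_of_gt hfα)] at e1
    rw [div_eq_iff (ne_of_gt hfβ)] at e2
    rw [div_div, div_mul_eq_mul_div,
      eq_div_iff (by positivity : (0:ℝ) < α * (1 - β) * (μ11 / (α * (1 - α)))).ne']
    rw [← mul_div_assoc, ← mul_div_assoc,
      div_eq_iff (by positivity : (α * (1 - α) : ℝ) ≠ 0)]
    linear_combination (α*(1-α)) * e2 - (α*(1-β)) * e1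
  · have hBae : ∀ᵐ ω, ω ∈ B := by
      rw [ae_iff]
      have : volume Bᶜ = 0 := by
        rw [measure_compl hBm (measure_ne_top _ _), hB1, measure_univ, tsub_self]
      exact this
    filter_upwards [hBae] with ω hω
    obtain ⟨-, -, hfα, -, hw1, -, -⟩ := hB ω hω
    have e1 := hμ11 ω hω
    rw [div_eq_iff (ne_of_gt hfα)] at e1
    rw [div_mul_eq_mul_div, eq_div_iff (by positivity : (α * (1 - α) : ℝ) ≠ 0)]
    linarith [e1]
  · have hBae : ∀ᵐ ω, ω ∈ B := by
      rw [ae_iff]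
      have : volume Bᶜ = 0 := by
        rw [measure_compl hBm (measure_ne_top _ _), hB1, measure_univ, tsub_self]
      exact this
    filter_upwards [hBae] with ω hω
    obtain ⟨-, -, -, hfβ, -, hw2, -⟩ := hB ω hω
    have e3 := hμ22 ω hω
    rw [div_eq_iff (ne_of_gt hfβ)] at e3
    rw [div_mul_eq_mul_div, eq_div_iff (by positivity : (β * (1 - β) : ℝ) ≠ 0)]
    linarith [e3]
end

section
/- Identification step in the proof of the strict-identification Proposition for linear double quantile models: Let X : Ω → ℝ^p be a random vector on a probability space (Ω, 𝒜, ℙ), and let F : Ω × ℝ → ℝ be such that for ℙ-a.e. ω the function F(ω, ·) is differentiable on ℝ with derivative f(ω, ·) strictly positive everywhere. Let θ, θ₀ ∈ ℝ^p and assume that the real random variable ω ↦ f(ω, X(ω)ᵀθ₀) · (F(ω, X(ω)ᵀθ) − F(ω, X(ω)ᵀθ₀)) · (X(ω)ᵀ(θ − θ₀)) is integrable with expectation zero. Then X(ω)ᵀθ = X(ω)ᵀθ₀ for ℙ-a.e. ω. -/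
open MeasureTheory Matrix

/-- Identification step for linear double quantile models: if for a.e.
`ω` the conditional cdf `F(ω, ·)` is differentiable with strictly positive derivative
`f(ω, ·)`, and the random variable
`f(ω, Xᵀθ₀) (F(ω, Xᵀθ) − F(ω, Xᵀθ₀)) (Xᵀ(θ − θ₀))` is integrable with expectation zero,
then `Xᵀθ = Xᵀθ₀` almost surely. -/
theorem linear_quantile_identification_step
    {Ω : Type*} [MeasureSpace Ω] [IsProbabilityMeasure (volume : Measure Ω)]
    {p : ℕ} (X : Ω → Fin p → ℝ)
    (F f : Ω → ℝ → ℝ)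
    (hF : ∀ᵐ ω, ∀ y : ℝ, HasDerivAt (F ω) (f ω y) y ∧ 0 < f ω y)
    (θ θ₀ : Fin p → ℝ)
    (hint : Integrable fun ω =>
      f ω (X ω ⬝ᵥ θ₀) * (F ω (X ω ⬝ᵥ θ) - F ω (X ω ⬝ᵥ θ₀)) * (X ω ⬝ᵥ (θ - θ₀)))
    (hzero : ∫ ω,
      f ω (X ω ⬝ᵥ θ₀) * (F ω (X ω ⬝ᵥ θ) - F ω (X ω ⬝ᵥ θ₀)) * (X ω ⬝ᵥ (θ - θ₀)) = 0) :
    ∀ᵐ ω, X ω ⬝ᵥ θ = X ω ⬝ᵥ θ₀ := by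

  have hnonneg : ∀ᵐ ω, 0 ≤ f ω (X ω ⬝ᵥ θ₀) * (F ω (X ω ⬝ᵥ θ) - F ω (X ω ⬝ᵥ θ₀)) * (X ω ⬝ᵥ (θ - θ₀)) := by
    filter_upwards [hF] with ω h
    have hmono : StrictMono (F ω) :=
      strictMono_of_deriv_pos (fun y => by rw [(h y).1.deriv]; exact (h y).2)
    have hd : X ω ⬝ᵥ (θ - θ₀) = X ω ⬝ᵥ θ - X ω ⬝ᵥ θ₀ := dotProduct_sub _ _ _
    rw [hd]
    rcases lt_trichotomy (X ω ⬝ᵥ θ) (X ω ⬝ᵥ θ₀) with hlt | heq | hgt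
    · have h1 := hmono hlt
      nlinarith [mul_pos (mul_pos (h (X ω ⬝ᵥ θ₀)).2 (sub_pos.mpr h1)) (sub_pos.mpr hlt)]
    · simp [heq]
    · have h1 := hmono hgt
      nlinarith [mul_pos (mul_pos (h (X ω ⬝ᵥ θ₀)).2 (sub_pos.mpr h1)) (sub_pos.mpr hgt)]
  have hzero' : ∀ᵐ ω, f ω (X ω ⬝ᵥ θ₀) * (F ω (X ω ⬝ᵥ θ) - F ω (X ω ⬝ᵥ θ₀)) * (X ω ⬝ᵥ (θ - θ₀)) = 0 :=
    (integral_eq_zero_iff_of_nonneg_ae hnonneg hint).mp hzero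
  filter_upwards [hF, hzero'] with ω h h0
  have hmono : StrictMono (F ω) :=
    strictMono_of_deriv_pos (fun y => by rw [(h y).1.deriv]; exact (h y).2)
  by_contra hne
  have hd : X ω ⬝ᵥ (θ - θ₀) = X ω ⬝ᵥ θ - X ω ⬝ᵥ θ₀ := dotProduct_sub _ _ _
  rw [hd] at h0
  have hfpos := (h (X ω ⬝ᵥ θ₀)).2
  rcases lt_or_gt_of_ne hne with hlt | hgt
  · have h1 := hmono hlt
    nlinarith [mul_pos (mul_pos hfpos (sub_pos.mpr h1)) (sub_pos.mpr hlt)]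
  · have h1 := hmono hgt
    nlinarith [mul_pos (mul_pos hfpos (sub_pos.mpr h1)) (sub_pos.mpr hgt)]
end
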